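/- Let A be a parametric timed Büchi automaton and α an abstraction over its symbolic semantics ⟦A⟧ such that the induced transition system ⟦A⟧^α is finite. A parameter valuation v is contained in the set Accepted returned by the Cumulative NDFS algorithm run on ⟦A⟧^α if and only if there exists an accepting run respecting v in ⟦A⟧^α. -/

import Mathlib

namespace PTASynth

open Relation

variable {L P : Type} {n : ℕ} [Fintype P]

/-! ### Affine expressions over parameters -/

/-- Affine expressions `z₀ + z₁p₁ + … + zₘpₘ` with integer coefficients. -/
structure AffExpr (P : Type) where
  const : ℤ
  coef : P → ℤ

noncomputable def AffExpr.eval (e : AffExpr P) (v : P → ℤ) : ℤ :=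
  e.const + ∑ p, e.coef p * v p

instance : Add (AffExpr P) :=
  ⟨fun e f => ⟨e.const + f.const, fun p => e.coef p + f.coef p⟩⟩

def AffExpr.ofInt (z : ℤ) : AffExpr P := ⟨z, fun _ => 0⟩

open Classical in
noncomputable def AffExpr.var (p : P) : AffExpr P :=
  ⟨0, fun q => if q = p then 1 else 0⟩

/-- `max_{lb,ub}(e)`: replace positively occurring parameters by their upper bound and
negatively occurring ones by their lower bound. -/
noncomputable def AffExpr.maxVal (e : AffExpr P) (lb ub : P → ℤ) : ℤ :=
  e.const + ∑ p, (if 0 ≤ e.coef p then e.coef p * ub p else e.coef p * lb p)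

/-- Extended affine expressions: `none` denotes `∞`. -/
abbrev EExpr (P : Type) := Option (AffExpr P)

noncomputable def EExpr.eval (e : EExpr P) (v : P → ℤ) : WithTop ℤ :=
  match e with
  | none => ⊤
  | some e => (AffExpr.eval e v : WithTop ℤ)

def EExpr.add : EExpr P → EExpr P → EExpr P
  | some e, some f => some (e + f)
  | _, _ => none

/-! ### Parameter constraints -/

/-- Relation symbols for parameter constraints. -/
inductive CRel | lt | le | ge | gt
deriving DecidableEq

def CRel.holds : CRel → WithTop ℤ → WithTop ℤ → Prop
  | .lt, a, b => a < b
  | .le, a, b => a ≤ b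
  | .ge, a, b => b ≤ a
  | .gt, a, b => b < a

def CRel.negRel : CRel → CRel
  | .lt => .ge
  | .le => .gt
  | .ge => .lt
  | .gt => .le

/-- A parameter constraint `e ∼ e'`. -/
structure Constr (P : Type) where
  lhs : EExpr P
  rel : CRel
  rhs : EExpr P

def Constr.neg (c : Constr P) : Constr P := ⟨c.lhs, c.rel.negRel, c.rhs⟩

def Constr.sat (c : Constr P) (v : P → ℤ) : Prop :=
  c.rel.holds (EExpr.eval c.lhs v) (EExpr.eval c.rhs v)

/-- `⟦C⟧`: the set of parameter valuations satisfying a constraint set. -/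
def csem (C : Set (Constr P)) : Set (P → ℤ) :=
  {v | ∀ c ∈ C, c.sat v}

/-- `C ⊨ c`: the constraint `c` covers the constraint set `C`. -/
def Covers (C : Set (Constr P)) (c : Constr P) : Prop :=
  ∀ v ∈ csem C, c.sat v

/-! ### Clock valuations -/

/-- Clock valuations over clocks `Fin (n+1)`, clock `0` is the zero clock `x₀`. -/
structure ClockVal (n : ℕ) where
  val : Fin (n + 1) → ℝ
  zero_eq : val 0 = 0
  nonneg : ∀ x, 0 ≤ val x

def ClockVal.zeroVal (n : ℕ) : ClockVal n := ⟨fun _ => 0, rfl, fun _ => le_refl 0⟩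

open Classical in
/-- `η⟨R⟩`: reset the clocks in `R` to `0`. -/
noncomputable def ClockVal.reset (η : ClockVal n) (R : Set (Fin (n + 1))) : ClockVal n where
  val x := if x = 0 ∨ x ∈ R then 0 else η.val x
  zero_eq := by simp
  nonneg x := by
    split
    · exact le_rfl
    · exact η.nonneg x

/-! ### Guards -/

/-- A bound `(≺, e)` with `≺ ∈ {≤, <}` (`true` means `≤`) and `e ∈ E(P) ∪ {∞}`. -/
abbrev Bnd (P : Type) := Bool × EExpr P

def Bnd.sat (b : Bnd P) (v : P → ℤ) (r : ℝ) : Prop :=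
  match b.2 with
  | none => True
  | some e => if b.1 then r ≤ (AffExpr.eval e v : ℝ) else r < (AffExpr.eval e v : ℝ)

/-- An atomic guard `xᵢ - xⱼ ≺ e`. -/
structure Atom (n : ℕ) (P : Type) where
  i : Fin (n + 1)
  j : Fin (n + 1)
  le : Bool
  e : EExpr P

/-- A guard is a finite conjunction of atomic guards. -/
abbrev Guard (n : ℕ) (P : Type) := List (Atom n P)

def Atom.sat (a : Atom n P) (v : P → ℤ) (η : ClockVal n) : Prop :=
  Bnd.sat (a.le, a.e) v (η.val a.i - η.val a.j)

def Guard.sat (g : Guard n P) (v : P → ℤ) (η : ClockVal n) : Prop :=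
  ∀ a ∈ g, a.sat v η

/-- Simple guards: one of the compared clocks is the zero clock and the bound is finite. -/
def Atom.Simple (a : Atom n P) : Prop := (a.i = 0 ∨ a.j = 0) ∧ a.e ≠ none

def Guard.Simple (g : Guard n P) : Prop := ∀ a ∈ g, a.Simple

/-! ### Parametric timed (Büchi) automata -/

/-- A parametric timed automaton. -/
structure PTA (L : Type) (n : ℕ) (P : Type) where
  l0 : L
  trans : Set (L × Guard n P × Set (Fin (n + 1)) × L)
  Inv : L → Guard n P
  simple_trans : ∀ t ∈ trans, Guard.Simple t.2.1
  simple_Inv : ∀ l, Guard.Simple (Inv l)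

/-- A parametric timed Büchi automaton. -/
structure PTBA (L : Type) (n : ℕ) (P : Type) extends PTA L n P where
  F : Set L

/-! ### Concrete semantics `⟦A⟧_v` -/

abbrev CState (L : Type) (n : ℕ) := L × ClockVal n

/-- Delay transition `(l,η) →^d (l,η+d)`. -/
def DelayStep (M : PTA L n P) (v : P → ℤ) (s : CState L n) (d : ℝ) (s' : CState L n) : Prop :=
  s'.1 = s.1 ∧ 0 ≤ d ∧ (∀ x : Fin (n + 1), x ≠ 0 → s'.2.val x = s.2.val x + d) ∧
    Guard.sat (M.Inv s'.1) v s'.2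

/-- Action transition `(l,η) →^act (l',η⟨R⟩)`. -/
def ActStep (M : PTA L n P) (v : P → ℤ) (s s' : CState L n) : Prop :=
  ∃ g R, (s.1, g, R, s'.1) ∈ M.trans ∧ Guard.sat g v s.2 ∧
    s'.2 = s.2.reset R ∧ Guard.sat (M.Inv s'.1) v s'.2

/-- `s →^{act}_d s'`: an action transition followed by a delay transition. -/
def ActD (M : PTA L n P) (v : P → ℤ) (s s' : CState L n) : Prop :=
  ∃ s'' d, ActStep M v s s'' ∧ DelayStep M v s'' d s'

/-- `s →^{act₁,…,act_k}_d s'`: composition of `→^{act}_d` steps where each step is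
labelled by the location of its source state. -/
def ActDSeq (M : PTA L n P) (v : P → ℤ) : List L → CState L n → CState L n → Prop
  | [], s, s' => s = s'
  | l :: ls, s, s' => ∃ s'', s.1 = l ∧ ActD M v s s'' ∧ ActDSeq M v ls s'' s'

/-- `s (→^{act₁,…,act_k}_d)* s'`: one or more iterations of `→^{act₁,…,act_k}_d`. -/
def ActDSeqPlus (M : PTA L n P) (v : P → ℤ) (acts : List L) :
    CState L n → CState L n → Prop :=
  TransGen (ActDSeq M v acts)

/-! ### Time-abstracting simulations -/

def IsTASim (M : PTA L n P) (v : P → ℤ) (R : CState L n → CState L n → Prop) : Prop :=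
  (∀ s1 s2 s1', R s1 s2 → ActStep M v s1 s1' →
      ∃ s2', ActStep M v s2 s2' ∧ R s1' s2') ∧
  (∀ s1 s2 s1' (d1 : ℝ), R s1 s2 → DelayStep M v s1 d1 s1' →
      ∃ d2 s2', DelayStep M v s2 d2 s2' ∧ R s1' s2')

def IsTABisim (M : PTA L n P) (v : P → ℤ) (R : CState L n → CState L n → Prop) : Prop :=
  IsTASim M v R ∧ IsTASim M v (flip R)

/-- `s ≼ s'`: some time-abstracting simulation relates `s` to `s'`. -/
def Sim (M : PTA L n P) (v : P → ℤ) (s s' : CState L n) : Prop :=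
  ∃ R, IsTASim M v R ∧ R s s'

/-! ### Runs of `⟦A⟧_v` -/

/-- A proper run: an infinite alternating sequence of delay and action transitions,
beginning with a delay, starting in the initial state. -/
def ProperRun (A : PTBA L n P) (v : P → ℤ) (s : ℕ → CState L n) (d : ℕ → ℝ) : Prop :=
  s 0 = (A.l0, ClockVal.zeroVal n) ∧
  ∀ i, ∃ s', DelayStep A.toPTA v (s i) (d i) s' ∧ ActStep A.toPTA v s' (s (i + 1))

def AcceptingRun (A : PTBA L n P) (v : P → ℤ) (s : ℕ → CState L n) (d : ℕ → ℝ) : Prop :=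
  ProperRun A v s d ∧ ∀ N, ∃ i, N ≤ i ∧ (s i).1 ∈ A.F

/-- A run is Zeno if the sum of all its delays is finite (bounded). -/
def ZenoD (d : ℕ → ℝ) : Prop := ∃ B : ℝ, ∀ N, ∑ i ∈ Finset.range N, d i ≤ B

def HasAccRun (A : PTBA L n P) (v : P → ℤ) : Prop := ∃ s d, AcceptingRun A v s d

/-- The PTBA has no Zeno accepting runs. -/
def NoZeno (A : PTBA L n P) : Prop :=
  ∀ (v : P → ℤ) s d, AcceptingRun A v s d → ¬ ZenoD d

/-! ### (Constrained) parametric difference bound matrices -/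

/-- A parametric difference bound matrix. -/
abbrev PDBM (n : ℕ) (P : Type) := Fin (n + 1) → Fin (n + 1) → Bnd P

/-- `⟦D⟧_v`. -/
def PDBM.sem (D : PDBM n P) (v : P → ℤ) : Set (ClockVal n) :=
  {η | ∀ i j, Bnd.sat (D i j) v (η.val i - η.val j)}

/-- A constrained PDBM `(C, D)`. -/
abbrev CPDBM (n : ℕ) (P : Type) := Set (Constr P) × PDBM n P

/-- `⟦C,D⟧ = {(v,η) | v ∈ ⟦C⟧ ∧ η ∈ ⟦D⟧_v}`. -/
def CPDBM.sem (cd : CPDBM n P) : Set ((P → ℤ) × ClockVal n) :=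
  {p | p.1 ∈ csem cd.1 ∧ p.2 ∈ PDBM.sem cd.2 p.1}

open Classical in
noncomputable def PDBM.upd (D : PDBM n P) (i j : Fin (n + 1)) (b : Bnd P) : PDBM n P :=
  fun i' j' => if i' = i ∧ j' = j then b else D i' j'

/-- The constraint `e_ij (≺_ij ⟹ ≺) e` used when applying the guard atom
`x_i - x_j ≺ e` to a PDBM. -/
def atomConstr (D : PDBM n P) (a : Atom n P) : Constr P :=
  ⟨(D a.i a.j).2, if !(D a.i a.j).1 || a.le then CRel.le else CRel.lt, a.e⟩

/-- Applying a guard atom to a constrained PDBM (possibly splitting the constraint set). -/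
inductive ApplyAtom : CPDBM n P → Atom n P → CPDBM n P → Prop
  | keep (C : Set (Constr P)) (D : PDBM n P) (a : Atom n P) :
      Covers C (atomConstr D a) → ApplyAtom (C, D) a (C, D)
  | repl (C : Set (Constr P)) (D : PDBM n P) (a : Atom n P) :
      Covers C (atomConstr D a).neg →
      ApplyAtom (C, D) a (C, PDBM.upd D a.i a.j (a.le, a.e))
  | splitKeep (C : Set (Constr P)) (D : PDBM n P) (a : Atom n P) :
      ¬ Covers C (atomConstr D a) → ¬ Covers C (atomConstr D a).neg →
      ApplyAtom (C, D) a (insert (atomConstr D a) C, D)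
  | splitRepl (C : Set (Constr P)) (D : PDBM n P) (a : Atom n P) :
      ¬ Covers C (atomConstr D a) → ¬ Covers C (atomConstr D a).neg →
      ApplyAtom (C, D) a (insert (atomConstr D a).neg C, PDBM.upd D a.i a.j (a.le, a.e))

/-- Applying a conjunction of guard atoms. -/
inductive ApplyGuard : CPDBM n P → Guard n P → CPDBM n P → Prop
  | nil (cd : CPDBM n P) : ApplyGuard cd [] cd
  | cons {cd cd' cd'' : CPDBM n P} {a : Atom n P} {g : Guard n P} :
      ApplyAtom cd a cd' → ApplyGuard cd' g cd'' → ApplyGuard cd (a :: g) cd''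

open Classical in
/-- `D⟨R⟩`: resetting a set of clocks. -/
noncomputable def PDBM.reset (D : PDBM n P) (R : Set (Fin (n + 1))) : PDBM n P :=
  fun i j =>
    if i = j then D i j
    else D (if i ∈ R then 0 else i) (if j ∈ R then 0 else j)

open Classical in
/-- `D↑`: the time successor (remove all upper bounds on clocks). -/
noncomputable def PDBM.up (D : PDBM n P) : PDBM n P :=
  fun i j => if i ≠ 0 ∧ j = 0 then ((false : Bool), (none : EExpr P)) else D i j

/-- The guard atom `x_i - x_j (≺_ik ∧ ≺_kj) (e_ik + e_kj)` used by the parametric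
Floyd–Warshall canonisation. -/
def fwAtom (D : PDBM n P) (k i j : Fin (n + 1)) : Atom n P :=
  ⟨i, j, (D i k).1 && (D k j).1, EExpr.add (D i k).2 (D k j).2⟩

/-- One step of the nondeterministic parametric Floyd–Warshall algorithm. -/
inductive FWStep : ℕ × ℕ × ℕ × CPDBM n P → ℕ × ℕ × ℕ × CPDBM n P → Prop
  | relax (k i j : Fin (n + 1)) (cd cd' : CPDBM n P) :
      ApplyAtom cd (fwAtom cd.2 k i j) cd' →
      FWStep ((k : ℕ), (i : ℕ), (j : ℕ), cd) ((k : ℕ), (i : ℕ), (j : ℕ) + 1, cd')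
  | nextI (k i : Fin (n + 1)) (cd : CPDBM n P) :
      FWStep ((k : ℕ), (i : ℕ), n + 1, cd) ((k : ℕ), (i : ℕ) + 1, 0, cd)
  | nextK (k : Fin (n + 1)) (cd : CPDBM n P) :
      FWStep ((k : ℕ), n + 1, 0, cd) ((k : ℕ) + 1, 0, 0, cd)

/-- `(C',D') ∈ (C,D)_c`: membership in the canonical set. -/
def Canon (cd cd' : CPDBM n P) : Prop :=
  ReflTransGen FWStep (0, 0, 0, cd) (n + 1, 0, 0, cd')

/-! ### Symbolic semantics `⟦A⟧` -/

abbrev SymState (L : Type) (n : ℕ) (P : Type) := L × CPDBM n P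

/-- The symbolic transition relation `⟹` of `⟦A⟧`. -/
def SymStep (A : PTBA L n P) (S S' : SymState L n P) : Prop :=
  ∃ g R, (S.1, g, R, S'.1) ∈ A.trans ∧
    ∃ cd1 cd2 cd3, ApplyGuard S.2 g cd1 ∧ Canon cd1 cd2 ∧
      ApplyGuard (cd2.1, PDBM.up (PDBM.reset cd2.2 R)) (A.Inv S'.1) cd3 ∧ Canon cd3 S'.2

/-- The constraints `lb(p) ≤ p ≤ ub(p)` for all parameters `p`. -/
noncomputable def boundC (lb ub : P → ℤ) : Set (Constr P) :=
  {c | ∃ p : P, c = ⟨some (AffExpr.var p), CRel.ge, some (AffExpr.ofInt (lb p))⟩ ∨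
                c = ⟨some (AffExpr.var p), CRel.le, some (AffExpr.ofInt (ub p))⟩}

/-- The PDBM with all entries `(0, ≤)`. -/
def E0 (n : ℕ) (P : Type) : PDBM n P := fun _ _ => ((true : Bool), some (AffExpr.ofInt 0))

/-- The initial symbolic states of `⟦A⟧`. -/
def SymInit (A : PTBA L n P) (lb ub : P → ℤ) : Set (SymState L n P) :=
  {S | S.1 = A.l0 ∧ ApplyGuard (boundC lb ub, PDBM.up (E0 n P)) (A.Inv A.l0) S.2}

/-- The (reachable) symbolic states of `⟦A⟧`. -/
def SymStates (A : PTBA L n P) (lb ub : P → ℤ) : Set (SymState L n P) :=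
  {S | ∃ S0 ∈ SymInit A lb ub, ReflTransGen (SymStep A) S0 S}

/-- `s ∈_v S`: the concrete state `s` is contained in the symbolic state `S` under `v`. -/
def InV (v : P → ℤ) (s : CState L n) (S : SymState L n P) : Prop :=
  s.1 = S.1 ∧ v ∈ csem S.2.1 ∧ s.2 ∈ PDBM.sem S.2.2 v

/-! ### Abstractions -/

abbrev Abstr (L : Type) (n : ℕ) (P : Type) := SymState L n P → Set (SymState L n P)

/-- `α` is an abstraction over `⟦A⟧`. -/
def IsAbstraction (A : PTBA L n P) (α : Abstr L n P) : Prop :=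
  (∀ S Q, Q ∈ α S → Q.1 = S.1 ∧ csem Q.2.1 ⊆ csem S.2.1 ∧
      CPDBM.sem (Q.2.1, S.2.2) ⊆ CPDBM.sem Q.2) ∧
  (∀ S Q, Q ∈ α S → ∀ (v : P → ℤ) (s : CState L n), InV v s Q →
      ∃ s', InV v s' S ∧ Sim A.toPTA v s s')

/-- The transition relation `⟹^α` of the induced transition system `⟦A⟧^α`. -/
def AbsStep (A : PTBA L n P) (α : Abstr L n P) (Q Q' : SymState L n P) : Prop :=
  ∃ S, SymStep A Q S ∧ Q' ∈ α S

/-- The initial states of `⟦A⟧^α`. -/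
def AbsInit (A : PTBA L n P) (lb ub : P → ℤ) (α : Abstr L n P) : Set (SymState L n P) :=
  {Q | ∃ S ∈ SymInit A lb ub, Q ∈ α S}

/-- The states of `⟦A⟧^α`. -/
def AbsStates (A : PTBA L n P) (lb ub : P → ℤ) (α : Abstr L n P) : Set (SymState L n P) :=
  {Q | ∃ Q0 ∈ AbsInit A lb ub α, ReflTransGen (AbsStep A α) Q0 Q}

/-- The semantic content `(l, ⟦C⟧, ⟦C,D⟧)` of a symbolic state. -/
def semClass (Q : SymState L n P) : L × Set (P → ℤ) × Set ((P → ℤ) × ClockVal n) :=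
  (Q.1, csem Q.2.1, CPDBM.sem Q.2)

/-- `α` is a finite abstraction: the induced state space is finite (up to semantics). -/
def FiniteAbs (A : PTBA L n P) (lb ub : P → ℤ) (α : Abstr L n P) : Prop :=
  (semClass '' AbsStates A lb ub α).Finite

/-- There is an accepting run of `⟦A⟧^α` respecting `v`. -/
def AbsAccRun (A : PTBA L n P) (lb ub : P → ℤ) (α : Abstr L n P) (v : P → ℤ) : Prop :=
  ∃ ρ : ℕ → SymState L n P, ρ 0 ∈ AbsInit A lb ub α ∧
    (∀ i, AbsStep A α (ρ i) (ρ (i + 1))) ∧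
    (∀ i, v ∈ csem (ρ i).2.1) ∧
    (∀ N, ∃ i, N ≤ i ∧ (ρ i).1 ∈ A.F)

/-- `Q ⟹^α … ⟹^α Q'` via transitions labelled by the locations of their source states. -/
def AbsSeq (A : PTBA L n P) (α : Abstr L n P) :
    List L → SymState L n P → SymState L n P → Prop
  | [], Q, Q' => Q = Q'
  | l :: ls, Q, Q'' => ∃ Q', Q.1 = l ∧ AbsStep A α Q Q' ∧ AbsSeq A α ls Q' Q''

/-! ### The pk-extrapolation -/

def guardsOf (A : PTBA L n P) : Set (Guard n P) :=
  {g | (∃ t ∈ A.trans, t.2.1 = g) ∨ (∃ l, A.Inv l = g)}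

/-- The affine expressions compared with the clock `x` in a guard or invariant of `A`. -/
def comparedWith (A : PTBA L n P) (x : Fin (n + 1)) : Set (AffExpr P) :=
  {e | ∃ g ∈ guardsOf A, ∃ a ∈ g, (a.i = x ∨ a.j = x) ∧ a.e = some e}

/-- `M(x)`: the maximal constant with which the clock `x` is compared. -/
noncomputable def Mmax (A : PTBA L n P) (lb ub : P → ℤ) (x : Fin (n + 1)) : ℤ :=
  sSup ((fun e => AffExpr.maxVal e lb ub) '' comparedWith A x)

/-- The four possible ways the pk-extrapolation treats the entry `(i,j)` with maximal
constants `Mi = M(x_i)` and `Mj = M(x_j)`. -/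
def PkEntry (Mi Mj : ℤ) (old new : Bnd P) (c : Constr P) : Prop :=
  (new = old ∧ c = ⟨old.2, CRel.le, some (AffExpr.ofInt Mi)⟩) ∨
  (new = ((false : Bool), (none : EExpr P)) ∧ c = ⟨old.2, CRel.gt, some (AffExpr.ofInt Mi)⟩) ∨
  (new = old ∧ c = ⟨old.2, CRel.ge, some (AffExpr.ofInt (-Mj))⟩) ∨
  (new = ((false : Bool), some (AffExpr.ofInt (-Mj))) ∧
    c = ⟨old.2, CRel.lt, some (AffExpr.ofInt (-Mj))⟩)

/-- The pk-extrapolation `α_pk`. -/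
noncomputable def pkExtra (A : PTBA L n P) (lb ub : P → ℤ) : Abstr L n P :=
  fun S => {Q | Q.1 = S.1 ∧
    ∃ f : Fin (n + 1) → Fin (n + 1) → Bnd P × Constr P,
      (∀ i j, PkEntry (Mmax A lb ub i) (Mmax A lb ub j) (S.2.2 i j) (f i j).1 (f i j).2) ∧
      (∀ i j, Q.2.2 i j = (f i j).1) ∧
      Q.2.1 = S.2.1 ∪ {c | ∃ i j, c = (f i j).2}}

/-! ### Region equivalence -/

/-- The maximal constant to which the clock `x` is compared in `A|v`. -/
noncomputable def cmax (A : PTBA L n P) (v : P → ℤ) (x : Fin (n + 1)) : ℤ :=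
  sSup ((fun e => AffExpr.eval e v) '' comparedWith A x)

/-- The standard region equivalence `≡_{A|v}` on the states of `⟦A⟧_v`. -/
def RegionEquiv (A : PTBA L n P) (v : P → ℤ) (s s' : CState L n) : Prop :=
  s.1 = s'.1 ∧
  (∀ x : Fin (n + 1),
      ((cmax A v x : ℝ) < s.2.val x ∧ (cmax A v x : ℝ) < s'.2.val x) ∨
      (⌊s.2.val x⌋ = ⌊s'.2.val x⌋ ∧ (Int.fract (s.2.val x) = 0 ↔ Int.fract (s'.2.val x) = 0))) ∧
  (∀ x y : Fin (n + 1),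
      s.2.val x ≤ (cmax A v x : ℝ) → s.2.val y ≤ (cmax A v y : ℝ) →
      (Int.fract (s.2.val x) ≤ Int.fract (s.2.val y) ↔
        Int.fract (s'.2.val x) ≤ Int.fract (s'.2.val y)))

/-! ### The Cumulative NDFS algorithm -/

variable {S V : Type}

/-- A finite Büchi graph whose states carry monotone sets of parameter valuations. -/
structure NGraph (S V : Type) where
  succ : S → List S
  init : S
  acc : S → Prop
  C : S → Set V
  mono : ∀ s s', s' ∈ succ s → C s' ⊆ C s

/-- Control frames of the Cumulative NDFS machine. -/
inductive NFrame (S : Type)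
  | callOuter (s : S)
  | outer (s : S) (rest : List S)
  | outerPop (s : S)
  | callInner (s : S)
  | inner (s : S) (rest : List S)

/-- Configurations of the Cumulative NDFS machine. -/
structure NConfig (S V : Type) where
  found : Set V
  outer : Set S
  inner : Set S
  stack : Set S
  ctrl : List (NFrame S)

/-- Small-step semantics of the Cumulative NDFS algorithm. -/
inductive NStep (G : NGraph S V) : NConfig S V → NConfig S V → Prop
  | callOuter (F O I St s k) :
      NStep G ⟨F, O, I, St, .callOuter s :: k⟩
              ⟨F, insert s O, I, insert s St, .outer s (G.succ s) :: k⟩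
  | outerSkip (F O I St s s' rest k) :
      (s' ∈ O ∨ s' ∈ St ∨ G.C s' ⊆ F) →
      NStep G ⟨F, O, I, St, .outer s (s' :: rest) :: k⟩
              ⟨F, O, I, St, .outer s rest :: k⟩
  | outerRec (F O I St s s' rest k) :
      s' ∉ O → s' ∉ St → ¬ G.C s' ⊆ F →
      NStep G ⟨F, O, I, St, .outer s (s' :: rest) :: k⟩
              ⟨F, O, I, St, .callOuter s' :: .outer s rest :: k⟩
  | outerAcc (F O I St s k) :
      G.acc s → ¬ G.C s ⊆ F →
      NStep G ⟨F, O, I, St, .outer s [] :: k⟩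
              ⟨F, O, I, St, .callInner s :: .outerPop s :: k⟩
  | outerDone (F O I St s k) :
      ¬ (G.acc s ∧ ¬ G.C s ⊆ F) →
      NStep G ⟨F, O, I, St, .outer s [] :: k⟩ ⟨F, O, I, St \ {s}, k⟩
  | outerPop (F O I St s k) :
      NStep G ⟨F, O, I, St, .outerPop s :: k⟩ ⟨F, O, I, St \ {s}, k⟩
  | callInner (F O I St s k) :
      NStep G ⟨F, O, I, St, .callInner s :: k⟩
              ⟨F, O, insert s I, St, .inner s (G.succ s) :: k⟩
  | innerFound (F O I St s s' rest k) :
      s' ∈ St →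
      NStep G ⟨F, O, I, St, .inner s (s' :: rest) :: k⟩ ⟨F ∪ G.C s', O, I, St, k⟩
  | innerRec (F O I St s s' rest k) :
      s' ∉ St → s' ∉ I → ¬ G.C s' ⊆ F →
      NStep G ⟨F, O, I, St, .inner s (s' :: rest) :: k⟩
              ⟨F, O, I, St, .callInner s' :: .inner s rest :: k⟩
  | innerSkip (F O I St s s' rest k) :
      s' ∉ St → (s' ∈ I ∨ G.C s' ⊆ F) →
      NStep G ⟨F, O, I, St, .inner s (s' :: rest) :: k⟩ ⟨F, O, I, St, .inner s rest :: k⟩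
  | innerDone (F O I St s k) :
      NStep G ⟨F, O, I, St, .inner s [] :: k⟩ ⟨F, O, I, St, k⟩

/-- The initial configuration of the Cumulative NDFS algorithm. -/
def initConfig (G : NGraph S V) : NConfig S V := ⟨∅, ∅, ∅, ∅, [.callOuter G.init]⟩

/-- The edge relation of the graph. -/
def Edge (G : NGraph S V) (s s' : S) : Prop := s' ∈ G.succ s

/-- One edge of a cycle under the valuation `v`: both endpoints carry `v`. -/
def StepUnder (G : NGraph S V) (v : V) (s s' : S) : Prop :=
  s' ∈ G.succ s ∧ v ∈ G.C s ∧ v ∈ G.C s'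

/-- The step from `c` to `c'` backtracks (in `OuterDFS`) from the state `q`. -/
def Backtracks (G : NGraph S V) (q : S) (c c' : NConfig S V) : Prop :=
  NStep G c c' ∧
    ((∃ k, c.ctrl = NFrame.outer q [] :: k ∧ c'.ctrl = k) ∨
     (∃ k, c.ctrl = NFrame.outerPop q :: k))



/-! ### Auxiliary development: correctness of the Cumulative NDFS machine -/

section NDFSProof

variable (G : NGraph S V)

/-- Reachability from the initial state of the graph. -/
def Reach (s : S) : Prop := ReflTransGen (Edge G) G.init s

/-- An accepting lasso through `a`, carrying the valuation `v`. -/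
def AccLasso (v : V) : Prop :=
  ∃ a, Reach G a ∧ G.acc a ∧ v ∈ G.C a ∧ TransGen (Edge G) a a

variable {G}

lemma C_anti_edge {s s' : S} (h : Edge G s s') : G.C s' ⊆ G.C s := G.mono s s' h

lemma C_anti {s s' : S} (h : ReflTransGen (Edge G) s s') : G.C s' ⊆ G.C s := by
  induction h with
  | refl => exact subset_rfl
  | tail h1 h2 ih =>
    rename_i b c
    exact (C_anti_edge h2).trans ih

variable (G)

/-- The processed successors `done` of an outer frame are visited or pruned,
except possibly for a pending recursive call. -/
def doneOK (F : Set V) (O : Set S) (p : Option S) (done : List S) : Prop :=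
  ∀ s' ∈ done, (s' ∈ O ∨ G.C s' ⊆ F) ∨ p = some s'

/-- The processed successors of an inner frame. -/
def doneOKI (F : Set V) (I St : Set S) (p : Option S) (done : List S) : Prop :=
  ∀ s' ∈ done, (s' ∉ St ∧ (s' ∈ I ∨ G.C s' ⊆ F)) ∨ p = some s'

/-- Well-formed outer zones of the control stack. -/
inductive OZ (F : Set V) (O : Set S) : List (NFrame S) → Option S → Set S → Option S → Prop
  | nil (p) : OZ F O [] none ∅ p
  | cons {z lk sts} (s rest done p) :
      OZ F O z lk sts none →
      (∀ t, lk = some t → Edge G t s) →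
      s ∈ O → s ∉ sts →
      G.succ s = done ++ rest →
      doneOK G F O p done →
      OZ F O (.outer s rest :: z) (some s) (insert s sts) p

/-- Well-formed inner zones of the control stack (above `.outerPop a`). -/
inductive IZ (F : Set V) (I St : Set S) (a : S) : List (NFrame S) → S → Option S → Prop
  | base (rest done p) :
      G.succ a = done ++ rest → doneOKI G F I St p done →
      IZ F I St a [.inner a rest] a p
  | cons {iz t} (x rest done p) :
      IZ F I St a iz t none →
      Edge G t x → x ∈ I →
      (∀ r, NFrame.inner x r ∉ iz) →
      G.succ x = done ++ rest → doneOKI G F I St p done →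
      IZ F I St a (.inner x rest :: iz) x p

/-- Structural well-formedness of a configuration's control stack. -/
inductive Shape (F : Set V) (O I St : Set S) : List (NFrame S) → Prop
  | outer {k lk sts} :
      OZ G F O k lk sts none → St = sts → Shape F O I St k
  | call {k lk sts} (u) :
      OZ G F O k lk sts (some u) →
      St = sts → u ∉ O → u ∉ sts →
      (∀ t, lk = some t → Edge G t u) → (lk = none → u = G.init) →
      Shape F O I St (.callOuter u :: k)
  | seedCall {k lk sts} (a) :
      OZ G F O k lk sts none →
      St = insert a sts → a ∉ sts → a ∈ O → G.acc a → a ∉ I →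
      (∀ t, lk = some t → Edge G t a) →
      (∀ s' ∈ G.succ a, s' ∈ O ∨ G.C s' ⊆ F) →
      Shape F O I St (.callInner a :: .outerPop a :: k)
  | pop {k lk sts} (a) :
      OZ G F O k lk sts none →
      St = insert a sts → a ∉ sts → a ∈ O → G.acc a → a ∈ I →
      (∀ t, lk = some t → Edge G t a) →
      (∀ s' ∈ G.succ a, s' ∈ O ∨ G.C s' ⊆ F) →
      Shape F O I St (.outerPop a :: k)
  | innerZ {k lk sts iz t} (a) :
      OZ G F O k lk sts none →
      IZ G F I St a iz t none →
      St = insert a sts → a ∉ sts → a ∈ O → G.acc a → a ∈ I →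
      (∀ t', lk = some t' → Edge G t' a) →
      (∀ s' ∈ G.succ a, s' ∈ O ∨ G.C s' ⊆ F) →
      Shape F O I St (iz ++ .outerPop a :: k)
  | innerCall {k lk sts iz t} (a u) :
      OZ G F O k lk sts none →
      IZ G F I St a iz t (some u) →
      Edge G t u → u ∉ I → u ∉ St → (u ∈ O ∨ G.C u ⊆ F) →
      St = insert a sts → a ∉ sts → a ∈ O → G.acc a → a ∈ I →
      (∀ t', lk = some t' → Edge G t' a) →
      (∀ s' ∈ G.succ a, s' ∈ O ∨ G.C s' ⊆ F) →
      Shape F O I St (.callInner u :: (iz ++ .outerPop a :: k))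

/-- The full invariant of the Cumulative NDFS machine. -/
structure InvAt (F : Set V) (O I St : Set S) (ctrl : List (NFrame S)) : Prop where
  shape : Shape G F O I St ctrl
  reachO : ∀ s ∈ O, Reach G s
  p1 : G.init ∈ O ∨ NFrame.callOuter G.init ∈ ctrl
  c1 : ∀ s ∈ O, s ∉ St → ∀ s' ∈ G.succ s, s' ∈ O ∨ G.C s' ⊆ F
  c4 : ∀ s ∈ O, s ∉ St → G.acc s → G.C s ⊆ F ∨ s ∈ I
  c7a : ∀ r ∈ I, r ∈ O ∨ G.C r ⊆ F
  c7b : ∀ r ∈ I, r ∈ St → G.C r ⊆ F ∨ NFrame.outerPop r ∈ ctrl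
  c3 : ∀ r ∈ I, (∀ rest, NFrame.inner r rest ∉ ctrl) →
        G.C r ⊆ F ∨
        ∀ s' ∈ G.succ r, G.C s' ⊆ F ∨ (s' ∈ I ∧ s' ∉ St)
  snd : ∀ w ∈ F, AccLasso G w
  ra : ∀ (v : V) (a : S), G.acc a → v ∈ G.C a → TransGen (Edge G) a a →
        v ∈ F ∨ (a ∉ I ∧ (a ∉ O ∨ a ∈ St)) ∨
        NFrame.outerPop a ∈ ctrl

/-- The invariant of a configuration. -/
def Inv (c : NConfig S V) : Prop := InvAt G c.found c.outer c.inner c.stack c.ctrl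

variable {G}

/-! #### Basic lemmas about zones -/

lemma OZ_frames {F O z lk sts p} (h : OZ G F O z lk sts p) :
    ∀ f ∈ z, ∃ s rest, f = NFrame.outer s rest := by
  induction h with
  | nil => simp
  | cons s rest done p _ _ _ _ _ _ ih =>
    intro f hf
    rcases List.mem_cons.1 hf with rfl | hf
    · exact ⟨s, rest, rfl⟩
    · exact ih f hf

lemma OZ_sub_O {F O z lk sts p} (h : OZ G F O z lk sts p) : sts ⊆ O := by
  induction h with
  | nil => simp
  | cons s rest done p _ _ hs _ _ _ ih =>
    intro x hx
    rcases Set.mem_insert_iff.1 hx with rfl | hx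
    · exact hs
    · exact ih hx

lemma OZ_lk_none {F O z sts p} (h : OZ G F O z none sts p) : z = [] ∧ sts = ∅ := by
  cases h with
  | nil => exact ⟨rfl, rfl⟩

lemma OZ_path {F O z lk sts p} (h : OZ G F O z lk sts p) :
    ∀ x ∈ sts, ∃ t, lk = some t ∧ ReflTransGen (Edge G) x t := by
  induction h with
  | nil => simp
  | cons s rest done p hz hlk _ _ _ _ ih =>
    intro x hx
    rcases Set.mem_insert_iff.1 hx with rfl | hx
    · exact ⟨x, rfl, ReflTransGen.refl⟩
    · rcases ih x hx with ⟨t, hlkt, hpath⟩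
      exact ⟨s, rfl, hpath.tail (hlk t hlkt)⟩

lemma OZ_mono {F O F' O' z lk sts p} (h : OZ G F O z lk sts p)
    (hF : F ⊆ F') (hO : O ⊆ O') : OZ G F' O' z lk sts p := by
  induction h with
  | nil => exact OZ.nil _
  | cons s rest done p _ hlk hs hns hsucc hdone ih =>
    refine OZ.cons s rest done p ih hlk (hO hs) hns hsucc ?_
    intro x hx
    rcases hdone x hx with (h1 | h1) | h1
    · exact Or.inl (Or.inl (hO h1))
    · exact Or.inl (Or.inr (h1.trans hF))
    · exact Or.inr h1

lemma OZ_discharge' {F O z lk sts p} (h : OZ G F O z lk sts p)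
    (hu : ∀ x, p = some x → x ∈ O) : OZ G F O z lk sts none := by
  induction h with
  | nil => exact OZ.nil _
  | cons s rest done p hz hlk hs hns hsucc hdone ih =>
    refine OZ.cons s rest done none hz hlk hs hns hsucc ?_
    intro x hx
    rcases hdone x hx with h1 | h1
    · exact Or.inl h1
    · exact Or.inl (Or.inl (hu x h1))

lemma OZ_discharge {F O z lk sts u} (h : OZ G F O z lk sts (some u)) (hu : u ∈ O) :
    OZ G F O z lk sts none :=
  OZ_discharge' h (fun x hx => by rw [Option.some_inj] at hx; exact hx ▸ hu)

lemma IZ_frames {F I St a iz t p} (h : IZ G F I St a iz t p) :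
    ∀ f ∈ iz, ∃ x rest, f = NFrame.inner x rest := by
  induction h with
  | base rest done p _ _ => intro f hf; simp at hf; exact ⟨a, rest, hf⟩
  | cons x rest done p _ _ _ _ _ _ ih =>
    intro f hf
    rcases List.mem_cons.1 hf with rfl | hf
    · exact ⟨x, rest, rfl⟩
    · exact ih f hf

lemma IZ_owners {F I St a iz t p} (h : IZ G F I St a iz t p) :
    ∀ x rest, NFrame.inner x rest ∈ iz → x = a ∨ x ∈ I := by
  induction h with
  | base rest done p _ _ =>
    intro x r hf; simp at hf; exact Or.inl hf.1
  | cons x rest done p _ _ hxI _ _ _ ih =>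
    intro y r hf
    rcases List.mem_cons.1 hf with hf | hf
    · cases hf; exact Or.inr hxI
    · exact ih y r hf

lemma IZ_path {F I St a iz t p} (h : IZ G F I St a iz t p) :
    ReflTransGen (Edge G) a t := by
  induction h with
  | base _ _ _ _ _ => exact ReflTransGen.refl
  | cons x rest done p _ hedge _ _ _ _ ih => exact ih.tail hedge

lemma IZ_mono {F F' I I' St a iz t p} (h : IZ G F I St a iz t p)
    (hF : F ⊆ F') (hI : I ⊆ I') : IZ G F' I' St a iz t p := by
  induction h with
  | base rest done p hsucc hdone =>
    refine IZ.base rest done p hsucc ?_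
    intro x hx
    rcases hdone x hx with ⟨h1, h2 | h2⟩ | h1
    · exact Or.inl ⟨h1, Or.inl (hI h2)⟩
    · exact Or.inl ⟨h1, Or.inr (h2.trans hF)⟩
    · exact Or.inr h1
  | cons x rest done p _ hedge hxI hnf hsucc hdone ih =>
    refine IZ.cons x rest done p ih hedge (hI hxI) hnf hsucc ?_
    intro y hy
    rcases hdone y hy with ⟨h1, h2 | h2⟩ | h1
    · exact Or.inl ⟨h1, Or.inl (hI h2)⟩
    · exact Or.inl ⟨h1, Or.inr (h2.trans hF)⟩
    · exact Or.inr h1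

lemma IZ_discharge' {F I St a iz t p} (h : IZ G F I St a iz t p)
    (hu : ∀ x, p = some x → x ∉ St ∧ x ∈ I) : IZ G F I St a iz t none := by
  induction h with
  | base rest done p hsucc hdone =>
    refine IZ.base rest done none hsucc ?_
    intro x hx
    rcases hdone x hx with h1 | h1
    · exact Or.inl h1
    · exact Or.inl ⟨(hu x h1).1, Or.inl (hu x h1).2⟩
  | cons x rest done p hiz hedge hxI hnf hsucc hdone ih =>
    refine IZ.cons x rest done none (ih (by simp)) hedge hxI hnf hsucc ?_
    intro y hy
    rcases hdone y hy with h1 | h1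
    · exact Or.inl h1
    · exact Or.inl ⟨(hu y h1).1, Or.inl (hu y h1).2⟩

lemma IZ_discharge {F I St a iz t u} (h : IZ G F I St a iz t (some u))
    (hu1 : u ∉ St) (hu2 : u ∈ I) : IZ G F I St a iz t none :=
  IZ_discharge' h (fun x hx => by rw [Option.some_inj] at hx; exact ⟨hx ▸ hu1, hx ▸ hu2⟩)

/-! #### Inversion lemmas for `Shape` -/

lemma shape_nil_inv {F O I St ctrl} (h : Shape G F O I St ctrl) (hc : ctrl = ([] : List (NFrame S))) :
    St = ∅ := by
  cases h with
  | outer hoz hst =>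
    subst hc; cases hoz with
    | nil => exact hst
  | call u hoz => simp at hc
  | seedCall a => simp at hc
  | pop a => simp at hc
  | innerZ a hoz hiz => exact absurd hc (by cases hiz <;> simp)
  | innerCall a u => simp at hc

lemma shape_callOuter_inv {F O I St ctrl u k} (h : Shape G F O I St ctrl)
    (hc : ctrl = .callOuter u :: k) :
    ∃ lk sts, OZ G F O k lk sts (some u) ∧ St = sts ∧ u ∉ O ∧ u ∉ sts ∧
      (∀ t, lk = some t → Edge G t u) ∧ (lk = none → u = G.init) := by
  cases h with
  | outer hoz hst =>
    subst hc; cases hoz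
  | call u' hoz hst h1 h2 h3 h4 =>
    obtain ⟨he1, he2⟩ := List.cons_eq_cons.1 hc
    cases he1; subst he2
    exact ⟨_, _, hoz, hst, h1, h2, h3, h4⟩
  | seedCall a => simp at hc
  | pop a => simp at hc
  | innerZ a hoz hiz => exact absurd hc (by cases hiz <;> simp)
  | innerCall a u => simp at hc

lemma shape_outer_inv {F O I St ctrl s rest k} (h : Shape G F O I St ctrl)
    (hc : ctrl = .outer s rest :: k) :
    ∃ lk sts done, OZ G F O k lk sts none ∧ St = insert s sts ∧
      (∀ t, lk = some t → Edge G t s) ∧ s ∈ O ∧ s ∉ sts ∧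
      G.succ s = done ++ rest ∧ doneOK G F O none done := by
  cases h with
  | outer hoz hst =>
    subst hc
    cases hoz with
    | cons s rest done p hz hlk hs hns hsucc hdone =>
      exact ⟨_, _, done, hz, hst, hlk, hs, hns, hsucc, hdone⟩
  | call u => simp at hc
  | seedCall a => simp at hc
  | pop a => simp at hc
  | innerZ a hoz hiz => exact absurd hc (by cases hiz <;> simp)
  | innerCall a u => simp at hc

lemma shape_pop_inv {F O I St ctrl a k} (h : Shape G F O I St ctrl)
    (hc : ctrl = .outerPop a :: k) :
    ∃ lk sts, OZ G F O k lk sts none ∧ St = insert a sts ∧ a ∉ sts ∧ a ∈ O ∧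
      G.acc a ∧ a ∈ I ∧ (∀ t, lk = some t → Edge G t a) ∧
      (∀ s' ∈ G.succ a, s' ∈ O ∨ G.C s' ⊆ F) := by
  cases h with
  | outer hoz hst => subst hc; cases hoz
  | call u => simp at hc
  | seedCall a' => simp at hc
  | pop a' hoz hst h1 h2 h3 h4 h5 h6 =>
    obtain ⟨he1, he2⟩ := List.cons_eq_cons.1 hc
    cases he1; subst he2
    exact ⟨_, _, hoz, hst, h1, h2, h3, h4, h5, h6⟩
  | innerZ a' hoz hiz => exact absurd hc (by cases hiz <;> simp)
  | innerCall a' u => simp at hc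

lemma shape_callInner_inv {F O I St ctrl u k'} (h : Shape G F O I St ctrl)
    (hc : ctrl = .callInner u :: k') :
    (∃ k lk sts, k' = .outerPop u :: k ∧
      OZ G F O k lk sts none ∧
      St = insert u sts ∧ u ∉ sts ∧ u ∈ O ∧ G.acc u ∧ u ∉ I ∧
      (∀ t, lk = some t → Edge G t u) ∧
      (∀ s' ∈ G.succ u, s' ∈ O ∨ G.C s' ⊆ F)) ∨
    (∃ a iz t k lk sts, k' = iz ++ .outerPop a :: k ∧
      OZ G F O k lk sts none ∧
      IZ G F I St a iz t (some u) ∧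
      Edge G t u ∧ u ∉ I ∧ u ∉ St ∧ (u ∈ O ∨ G.C u ⊆ F) ∧
      St = insert a sts ∧ a ∉ sts ∧ a ∈ O ∧ G.acc a ∧ a ∈ I ∧
      (∀ t', lk = some t' → Edge G t' a) ∧
      (∀ s' ∈ G.succ a, s' ∈ O ∨ G.C s' ⊆ F)) := by
  cases h with
  | outer hoz hst => subst hc; cases hoz
  | call u' => simp at hc
  | seedCall a hoz hst h1 h2 h3 h4 h5 h6 =>
    obtain ⟨he1, he2⟩ := List.cons_eq_cons.1 hc
    cases he1
    exact Or.inl ⟨_, _, _, he2.symm, hoz, hst, h1, h2, h3, h4, h5, h6⟩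
  | pop a => simp at hc
  | innerZ a hoz hiz => exact absurd hc (by cases hiz <;> simp)
  | innerCall a u' hoz hiz he hu1 hu2 hu3 hst h1 h2 h3 h4 h5 h6 =>
    obtain ⟨he1, he2⟩ := List.cons_eq_cons.1 hc
    cases he1
    exact Or.inr ⟨a, _, _, _, _, _, he2.symm, hoz, hiz, he, hu1, hu2, hu3, hst, h1, h2, h3, h4, h5, h6⟩

lemma shape_inner_inv {F O I St ctrl s rest k'} (h : Shape G F O I St ctrl)
    (hc : ctrl = .inner s rest :: k') :
    ∃ a iz2 k lk sts done,
      OZ G F O k lk sts none ∧ St = insert a sts ∧ a ∉ sts ∧ a ∈ O ∧ G.acc a ∧ a ∈ I ∧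
      (∀ t', lk = some t' → Edge G t' a) ∧ (∀ s' ∈ G.succ a, s' ∈ O ∨ G.C s' ⊆ F) ∧
      G.succ s = done ++ rest ∧ doneOKI G F I St none done ∧ s ∈ I ∧
      ReflTransGen (Edge G) a s ∧
      k' = iz2 ++ .outerPop a :: k ∧
      ((iz2 = [] ∧ s = a) ∨ (∃ t2, IZ G F I St a iz2 t2 none ∧ Edge G t2 s ∧
        (∀ r, NFrame.inner s r ∉ iz2))) ∧
      (∀ rest' p done', G.succ s = done' ++ rest' → doneOKI G F I St p done' →
        IZ G F I St a (.inner s rest' :: iz2) s p) := by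
  cases h with
  | outer hoz hst => subst hc; cases hoz
  | call u => simp at hc
  | seedCall a => simp at hc
  | pop a => simp at hc
  | innerCall a u => simp at hc
  | innerZ a hoz hiz hst h1 h2 h3 h4 h5 h6 =>
    cases hiz with
    | base rest0 done p hsucc hdone =>
      simp only [List.cons_append, List.nil_append] at hc
      obtain ⟨he1, he2⟩ := List.cons_eq_cons.1 hc
      injection he1 with hx hy
      subst hx; subst hy
      refine ⟨_, [], _, _, _, done, hoz, hst, h1, h2, h3, h4, h5, h6, hsucc, hdone, h4,
        ReflTransGen.refl, he2.symm, Or.inl ⟨rfl, rfl⟩, ?_⟩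
      intro rest' p done' hsucc' hdone'
      exact IZ.base rest' done' p hsucc' hdone'
    | cons x rest0 done p hiz2 hedge hxI hnf hsucc hdone =>
      simp only [List.cons_append] at hc
      obtain ⟨he1, he2⟩ := List.cons_eq_cons.1 hc
      injection he1 with hx hy
      subst hx; subst hy
      rename_i iz2 t2
      refine ⟨a, iz2, _, _, _, done, hoz, hst, h1, h2, h3, h4, h5, h6, hsucc, hdone, hxI,
        (IZ_path hiz2).tail hedge, he2.symm, Or.inr ⟨t2, hiz2, hedge, hnf⟩, ?_⟩
      intro rest' p' done' hsucc' hdone'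
      exact IZ.cons _ rest' done' p' hiz2 hedge hxI hnf hsucc' hdone'

lemma shape_no_inner {F O k lk sts p} (hoz : OZ G F O k lk sts p) :
    ∀ r rest, NFrame.inner r rest ∉ k := by
  intro r rest hmem
  obtain ⟨s, rest', habs⟩ := OZ_frames hoz _ hmem
  simp at habs

lemma shape_no_pop_OZ {F O k lk sts p} (hoz : OZ G F O k lk sts p) :
    ∀ b, NFrame.outerPop b ∉ k := by
  intro b hmem
  obtain ⟨s, rest', habs⟩ := OZ_frames hoz _ hmem
  simp at habs

lemma shape_no_pop_IZ {F I St a iz t p} (hiz : IZ G F I St a iz t p) :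
    ∀ b, NFrame.outerPop b ∉ iz := by
  intro b hmem
  obtain ⟨s, rest', habs⟩ := IZ_frames hiz _ hmem
  simp at habs

/-! #### The walk lemma: fully processed red cycles force detection -/

lemma walk_lemma {F : Set V} {I St : Set S} {ctrl : List (NFrame S)} {v : V} {a : S}
    (hC3 : ∀ r ∈ I, (∀ rest, NFrame.inner r rest ∉ ctrl) →
      G.C r ⊆ F ∨ ∀ s' ∈ G.succ r, G.C s' ⊆ F ∨ (s' ∈ I ∧ s' ∉ St))
    (hNoInner : ∀ r rest, NFrame.inner r rest ∉ ctrl)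
    (hvF : v ∉ F) (hva : v ∈ G.C a) (haSt : a ∈ St) :
    ∀ x, ReflTransGen (Edge G) x a → x ∈ I → x ∉ St → False := by
  intro x hx
  induction hx using ReflTransGen.head_induction_on with
  | refl => intro _ hxSt; exact hxSt haSt
  | head hstep htail ih =>
    rename_i x y
    intro hxI hxSt
    rcases hC3 x hxI (fun rest => hNoInner x rest) with h1 | h1
    · exact hvF (h1 (C_anti (htail.head hstep) hva))
    · rcases h1 y hstep with h2 | ⟨h2, h3⟩
      · exact hvF (h2 (C_anti htail hva))
      · exact ih h2 h3

/-- Given the invariant facts at an `outerPop a` configuration, any accepting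
cycle through `a` carrying `v` forces `v ∈ F`. -/
lemma pop_detect {F : Set V} {I St : Set S} {ctrl : List (NFrame S)} {v : V} {a : S}
    (hC3 : ∀ r ∈ I, (∀ rest, NFrame.inner r rest ∉ ctrl) →
      G.C r ⊆ F ∨ ∀ s' ∈ G.succ r, G.C s' ⊆ F ∨ (s' ∈ I ∧ s' ∉ St))
    (hNoInner : ∀ r rest, NFrame.inner r rest ∉ ctrl)
    (hva : v ∈ G.C a) (haSt : a ∈ St) (haI : a ∈ I)
    (hcyc : TransGen (Edge G) a a) : v ∈ F := by
  by_contra hvF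
  obtain ⟨y, hay, hya⟩ : ∃ y, Edge G a y ∧ ReflTransGen (Edge G) y a :=
    Relation.TransGen.head'_iff.1 hcyc
  rcases hC3 a haI (fun rest => hNoInner a rest) with h1 | h1
  · exact hvF (h1 hva)
  · rcases h1 y hay with h2 | ⟨h2, h3⟩
    · exact hvF (h2 (C_anti hya hva))
    · exact walk_lemma hC3 hNoInner hvF hva haSt y hya h2 h3

/-! #### The invariant holds initially -/

lemma Inv_init : Inv G (initConfig G) := by
  refine InvAt.mk ?shape ?reachO ?p1 ?c1 ?c4 ?c7a ?c7b ?c3 ?snd ?ra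
  case shape =>
    refine Shape.call G.init (OZ.nil _) rfl (fun h => h) (fun h => h) ?_ ?_
    · intro t ht; cases ht
    · intro _; rfl
  case reachO => intro s hs; cases hs
  case p1 => exact Or.inr (by simp [initConfig])
  case c1 => intro s hs; cases hs
  case c4 => intro s hs; cases hs
  case c7a => intro r hr; cases hr
  case c7b => intro r hr; cases hr
  case c3 => intro r hr; cases hr
  case snd => intro w hw; cases hw
  case ra => intro v a _ _ _; exact Or.inr (Or.inl ⟨fun h => h.elim, Or.inl fun h => h.elim⟩)

lemma OZ_lk_mem {F O z lk sts p t} (h : OZ G F O z lk sts p) (hl : lk = some t) :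
    t ∈ sts := by
  cases h with
  | nil => cases hl
  | cons s rest done p _ _ _ _ _ _ =>
    rw [Option.some_inj] at hl
    exact hl ▸ Set.mem_insert _ _

/-! #### Preservation of the invariant, step by step -/

lemma inv_callOuter {F O I St s k} (inv : InvAt G F O I St (.callOuter s :: k)) :
    InvAt G F (insert s O) I (insert s St) (.outer s (G.succ s) :: k) := by
  obtain ⟨lk, sts, hoz, hst, hsO, hsSts, hlk, hinitlk⟩ :=
    shape_callOuter_inv inv.shape rfl
  subst hst
  have hnopop : ∀ b, NFrame.outerPop b ∉ NFrame.callOuter s :: k := by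
    intro b hb
    rcases List.mem_cons.1 hb with h | h
    · simp at h
    · exact shape_no_pop_OZ hoz b h
  have hreach_s : Reach G s := by
    cases hlk' : lk with
    | none => exact hinitlk hlk' ▸ ReflTransGen.refl
    | some t =>
      exact (inv.reachO t (OZ_sub_O hoz (OZ_lk_mem hoz hlk'))).tail (hlk t hlk')
  refine InvAt.mk ?shape ?reachO ?p1 ?c1 ?c4 ?c7a ?c7b ?c3 ?snd ?ra
  case shape =>
    refine Shape.outer (OZ.cons s (G.succ s) [] none ?_ hlk ?_ hsSts (by simp) (by simp [doneOK])) rfl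
    · exact OZ_discharge' (OZ_mono hoz subset_rfl (Set.subset_insert _ _))
        (fun x hx => by rw [Option.some_inj] at hx; exact hx ▸ Set.mem_insert _ _)
    · exact Set.mem_insert _ _
  case reachO =>
    intro x hx
    rcases Set.mem_insert_iff.1 hx with rfl | hx
    · exact hreach_s
    · exact inv.reachO x hx
  case p1 =>
    rcases inv.p1 with h | h
    · exact Or.inl (Set.mem_insert_of_mem _ h)
    · rcases List.mem_cons.1 h with h' | h'
      · injection h' with h''
        exact Or.inl (h'' ▸ Set.mem_insert _ _)
      · exact Or.inr (List.mem_cons_of_mem _ h')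
  case c1 =>
    intro x hx hxSt s' hs'
    rcases Set.mem_insert_iff.1 hx with rfl | hx
    · exact absurd (Set.mem_insert _ _) hxSt
    · rcases inv.c1 x hx (fun h => hxSt (Set.mem_insert_of_mem _ h)) s' hs' with h | h
      · exact Or.inl (Set.mem_insert_of_mem _ h)
      · exact Or.inr h
  case c4 =>
    intro x hx hxSt hacc
    rcases Set.mem_insert_iff.1 hx with rfl | hx
    · exact absurd (Set.mem_insert _ _) hxSt
    · exact inv.c4 x hx (fun h => hxSt (Set.mem_insert_of_mem _ h)) hacc
  case c7a =>
    intro r hr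
    rcases inv.c7a r hr with h | h
    · exact Or.inl (Set.mem_insert_of_mem _ h)
    · exact Or.inr h
  case c7b =>
    intro r hr hrSt
    rcases Set.mem_insert_iff.1 hrSt with rfl | hrSt
    · rcases inv.c7a r hr with h | h
      · exact absurd h hsO
      · exact Or.inl h
    · rcases inv.c7b r hr hrSt with h | h
      · exact Or.inl h
      · exact absurd h (hnopop r)
  case c3 =>
    intro r hr hnf
    have hnf' : ∀ rest, NFrame.inner r rest ∉ NFrame.callOuter s :: k := by
      intro rest hmem
      rcases List.mem_cons.1 hmem with h | h
      · simp at h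
      · exact hnf rest (List.mem_cons_of_mem _ h)
    rcases inv.c3 r hr hnf' with h | h
    · exact Or.inl h
    · refine Or.inr fun s' hs' => ?_
      rcases h s' hs' with h1 | ⟨h1, h2⟩
      · exact Or.inl h1
      · by_cases hss : s' = s
        · subst hss
          rcases inv.c7a s' h1 with h3 | h3
          · exact absurd h3 hsO
          · exact Or.inl h3
        · refine Or.inr ⟨h1, fun hmem => ?_⟩
          exact h2 ((Set.mem_insert_iff.1 hmem).resolve_left hss)
  case snd => exact inv.snd
  case ra =>
    intro v a hacc hva hcyc
    rcases inv.ra v a hacc hva hcyc with h | ⟨h1, h2⟩ | h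
    · exact Or.inl h
    · refine Or.inr (Or.inl ⟨h1, ?_⟩)
      by_cases has : a = s
      · exact Or.inr (has ▸ Set.mem_insert _ _)
      · rcases h2 with h2 | h2
        · exact Or.inl fun hmem => h2 ((Set.mem_insert_iff.1 hmem).resolve_left has)
        · exact Or.inr (Set.mem_insert_of_mem _ h2)
    · exact absurd h (hnopop a)

lemma inv_outerSkip {F O I St s s' rest k}
    (hcond : s' ∈ O ∨ s' ∈ St ∨ G.C s' ⊆ F)
    (inv : InvAt G F O I St (.outer s (s' :: rest) :: k)) :
    InvAt G F O I St (.outer s rest :: k) := by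
  obtain ⟨lk, sts, done, hoz, hst, hlk, hsO, hsSts, hsucc, hdone⟩ :=
    shape_outer_inv inv.shape rfl
  subst hst
  have htrans : ∀ f : NFrame S, f ∈ NFrame.outer s rest :: k →
      f ∈ NFrame.outer s (s' :: rest) :: k ∨ f = NFrame.outer s rest := by
    intro f hf
    rcases List.mem_cons.1 hf with rfl | hf
    · exact Or.inr rfl
    · exact Or.inl (List.mem_cons_of_mem _ hf)
  refine InvAt.mk ?shape inv.reachO ?p1 inv.c1 inv.c4 inv.c7a ?c7b ?c3 inv.snd ?ra
  case shape =>
    refine Shape.outer (OZ.cons s rest (done ++ [s']) none hoz hlk hsO hsSts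
      (by rw [hsucc, List.append_assoc]; rfl) ?_) rfl
    intro x hx
    rcases List.mem_append.1 hx with hx | hx
    · exact hdone x hx
    · simp only [List.mem_singleton] at hx
      subst hx
      refine Or.inl ?_
      rcases hcond with h | h | h
      · exact Or.inl h
      · rcases Set.mem_insert_iff.1 h with rfl | h
        · exact Or.inl hsO
        · exact Or.inl (OZ_sub_O hoz h)
      · exact Or.inr h
  case p1 =>
    rcases inv.p1 with h | h
    · exact Or.inl h
    · rcases List.mem_cons.1 h with h' | h'
      · simp at h'
      · exact Or.inr (List.mem_cons_of_mem _ h')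
  case c7b =>
    intro r hr hrSt
    rcases inv.c7b r hr hrSt with h | h
    · exact Or.inl h
    · rcases List.mem_cons.1 h with h' | h'
      · simp at h'
      · exact Or.inr (List.mem_cons_of_mem _ h')
  case c3 =>
    intro r hr hnf
    refine inv.c3 r hr ?_
    intro rest' hmem
    rcases List.mem_cons.1 hmem with h' | h'
    · simp at h'
    · exact hnf rest' (List.mem_cons_of_mem _ h')
  case ra =>
    intro v a hacc hva hcyc
    rcases inv.ra v a hacc hva hcyc with h | h | h
    · exact Or.inl h
    · exact Or.inr (Or.inl h)
    · rcases List.mem_cons.1 h with h' | h'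
      · simp at h'
      · exact Or.inr (Or.inr (List.mem_cons_of_mem _ h'))

lemma inv_outerRec {F O I St s s' rest k}
    (h1 : s' ∉ O) (h2 : s' ∉ St) (h3 : ¬ G.C s' ⊆ F)
    (inv : InvAt G F O I St (.outer s (s' :: rest) :: k)) :
    InvAt G F O I St (.callOuter s' :: .outer s rest :: k) := by
  obtain ⟨lk, sts, done, hoz, hst, hlk, hsO, hsSts, hsucc, hdone⟩ :=
    shape_outer_inv inv.shape rfl
  subst hst
  have hedge : Edge G s s' := by
    show s' ∈ G.succ s
    rw [hsucc]
    exact List.mem_append_right _ (List.mem_cons_self)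
  refine InvAt.mk ?shape inv.reachO ?p1 inv.c1 inv.c4 inv.c7a ?c7b ?c3 inv.snd ?ra
  case shape =>
    refine Shape.call s' (OZ.cons s rest (done ++ [s']) (some s') hoz hlk hsO hsSts
      (by rw [hsucc, List.append_assoc]; rfl) ?_) rfl h1 h2 ?_ ?_
    · intro x hx
      rcases List.mem_append.1 hx with hx | hx
      · exact Or.inl ((hdone x hx).resolve_right (by simp))
      · simp only [List.mem_singleton] at hx
        exact Or.inr (by rw [hx])
    · intro t ht
      rw [Option.some_inj] at ht
      exact ht ▸ hedge
    · intro h; cases h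
  case p1 =>
    rcases inv.p1 with h | h
    · exact Or.inl h
    · rcases List.mem_cons.1 h with h' | h'
      · simp at h'
      · exact Or.inr (List.mem_cons_of_mem _ (List.mem_cons_of_mem _ h'))
  case c7b =>
    intro r hr hrSt
    rcases inv.c7b r hr hrSt with h | h
    · exact Or.inl h
    · rcases List.mem_cons.1 h with h' | h'
      · simp at h'
      · exact Or.inr (List.mem_cons_of_mem _ (List.mem_cons_of_mem _ h'))
  case c3 =>
    intro r hr hnf
    refine inv.c3 r hr ?_
    intro rest' hmem
    rcases List.mem_cons.1 hmem with h' | h'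
    · simp at h'
    · exact hnf rest' (List.mem_cons_of_mem _ (List.mem_cons_of_mem _ h'))
  case ra =>
    intro v a hacc hva hcyc
    rcases inv.ra v a hacc hva hcyc with h | h | h
    · exact Or.inl h
    · exact Or.inr (Or.inl h)
    · rcases List.mem_cons.1 h with h' | h'
      · simp at h'
      · exact Or.inr (Or.inr (List.mem_cons_of_mem _ (List.mem_cons_of_mem _ h')))

lemma inv_outerAcc {F O I St s k}
    (haccs : G.acc s) (hCF : ¬ G.C s ⊆ F)
    (inv : InvAt G F O I St (.outer s [] :: k)) :
    InvAt G F O I St (.callInner s :: .outerPop s :: k) := by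
  obtain ⟨lk, sts, done, hoz, hst, hlk, hsO, hsSts, hsucc, hdone⟩ :=
    shape_outer_inv inv.shape rfl
  subst hst
  have hsuccfact : ∀ s' ∈ G.succ s, s' ∈ O ∨ G.C s' ⊆ F := by
    intro s' hs'
    have : s' ∈ done := by rw [List.append_nil] at hsucc; exact hsucc ▸ hs'
    exact (hdone s' this).resolve_right (by simp)
  have hsnI : s ∉ I := by
    intro hsI
    rcases inv.c7b s hsI (Set.mem_insert _ _) with h | h
    · exact hCF h
    · rcases List.mem_cons.1 h with h' | h'
      · simp at h'
      · exact shape_no_pop_OZ hoz s h'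
  refine InvAt.mk ?shape inv.reachO ?p1 inv.c1 inv.c4 inv.c7a ?c7b ?c3 inv.snd ?ra
  case shape =>
    exact Shape.seedCall s hoz rfl hsSts hsO haccs hsnI hlk hsuccfact
  case p1 =>
    rcases inv.p1 with h | h
    · exact Or.inl h
    · rcases List.mem_cons.1 h with h' | h'
      · simp at h'
      · exact Or.inr (List.mem_cons_of_mem _ (List.mem_cons_of_mem _ h'))
  case c7b =>
    intro r hr hrSt
    rcases inv.c7b r hr hrSt with h | h
    · exact Or.inl h
    · rcases List.mem_cons.1 h with h' | h'
      · simp at h'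
      · exact Or.inr (List.mem_cons_of_mem _ (List.mem_cons_of_mem _ h'))
  case c3 =>
    intro r hr hnf
    refine inv.c3 r hr ?_
    intro rest' hmem
    rcases List.mem_cons.1 hmem with h' | h'
    · simp at h'
    · exact hnf rest' (List.mem_cons_of_mem _ (List.mem_cons_of_mem _ h'))
  case ra =>
    intro v a hacc hva hcyc
    rcases inv.ra v a hacc hva hcyc with h | h | h
    · exact Or.inl h
    · exact Or.inr (Or.inl h)
    · rcases List.mem_cons.1 h with h' | h'
      · simp at h'
      · exact Or.inr (Or.inr (List.mem_cons_of_mem _ (List.mem_cons_of_mem _ h')))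

lemma inv_outerDone {F O I St s k}
    (hcond : ¬(G.acc s ∧ ¬ G.C s ⊆ F))
    (inv : InvAt G F O I St (.outer s [] :: k)) :
    InvAt G F O I (St \ {s}) k := by
  obtain ⟨lk, sts, done, hoz, hst, hlk, hsO, hsSts, hsucc, hdone⟩ :=
    shape_outer_inv inv.shape rfl
  subst hst
  have hdiff : insert s sts \ {s} = sts := Set.insert_diff_self_of_notMem hsSts
  have hsuccfact : ∀ s' ∈ G.succ s, s' ∈ O ∨ G.C s' ⊆ F := by
    intro s' hs'
    have : s' ∈ done := by rw [List.append_nil] at hsucc; exact hsucc ▸ hs'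
    exact (hdone s' this).resolve_right (by simp)
  have hout : ∀ x, x ∈ insert s sts \ {s} → x ∈ insert s sts := fun x hx => hx.1
  have hnotin : ∀ x, x ≠ s → x ∉ insert s sts \ {s} → x ∉ insert s sts := by
    intro x hxs hx hmem
    exact hx ⟨hmem, hxs⟩
  refine InvAt.mk ?shape inv.reachO ?p1 ?c1 ?c4 inv.c7a ?c7b ?c3 inv.snd ?ra
  case shape => exact Shape.outer hoz hdiff
  case p1 =>
    rcases inv.p1 with h | h
    · exact Or.inl h
    · rcases List.mem_cons.1 h with h' | h'
      · simp at h'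
      · exact Or.inr h'
  case c1 =>
    intro x hx hxSt s' hs'
    by_cases hxs : x = s
    · exact hsuccfact s' (hxs ▸ hs')
    · exact inv.c1 x hx (hnotin x hxs hxSt) s' hs'
  case c4 =>
    intro x hx hxSt haccx
    by_cases hxs : x = s
    · subst hxs
      refine Or.inl ?_
      by_contra hcf
      exact hcond ⟨haccx, hcf⟩
    · exact inv.c4 x hx (hnotin x hxs hxSt) haccx
  case c7b =>
    intro r hr hrSt
    rcases inv.c7b r hr (hout r hrSt) with h | h
    · exact Or.inl h
    · rcases List.mem_cons.1 h with h' | h'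
      · simp at h'
      · exact absurd h' (shape_no_pop_OZ hoz r)
  case c3 =>
    intro r hr hnf
    have hnf' : ∀ rest, NFrame.inner r rest ∉ NFrame.outer s [] :: k := by
      intro rest hmem
      rcases List.mem_cons.1 hmem with h' | h'
      · simp at h'
      · exact hnf rest h'
    rcases inv.c3 r hr hnf' with h | h
    · exact Or.inl h
    · refine Or.inr fun s' hs' => ?_
      rcases h s' hs' with h1 | ⟨h1, h2⟩
      · exact Or.inl h1
      · exact Or.inr ⟨h1, fun hm => h2 hm.1⟩
  case ra =>
    intro v a hacc hva hcyc
    rcases inv.ra v a hacc hva hcyc with h | ⟨hna, hW⟩ | h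
    · exact Or.inl h
    · by_cases has : a = s
      · subst has
        have hCsF : G.C a ⊆ F := by
          by_contra hcf
          exact hcond ⟨hacc, hcf⟩
        exact Or.inl (hCsF hva)
      · refine Or.inr (Or.inl ⟨hna, ?_⟩)
        rcases hW with h' | h'
        · exact Or.inl h'
        · exact Or.inr ⟨h', has⟩
    · rcases List.mem_cons.1 h with h' | h'
      · simp at h'
      · exact Or.inr (Or.inr h')

lemma inv_outerPop {F O I St s k}
    (inv : InvAt G F O I St (.outerPop s :: k)) :
    InvAt G F O I (St \ {s}) k := by
  obtain ⟨lk, sts, hoz, hst, hsSts, hsO, haccs, hsI, hlk, hsuccfact⟩ :=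
    shape_pop_inv inv.shape rfl
  subst hst
  have hdiff : insert s sts \ {s} = sts := Set.insert_diff_self_of_notMem hsSts
  have hnotin : ∀ x, x ≠ s → x ∉ insert s sts \ {s} → x ∉ insert s sts := by
    intro x hxs hx hmem
    exact hx ⟨hmem, hxs⟩
  have hNoInner : ∀ r rest, NFrame.inner r rest ∉ NFrame.outerPop s :: k := by
    intro r rest hmem
    rcases List.mem_cons.1 hmem with h' | h'
    · simp at h'
    · exact shape_no_inner hoz r rest h'
  refine InvAt.mk ?shape inv.reachO ?p1 ?c1 ?c4 inv.c7a ?c7b ?c3 inv.snd ?ra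
  case shape => exact Shape.outer hoz hdiff
  case p1 =>
    rcases inv.p1 with h | h
    · exact Or.inl h
    · rcases List.mem_cons.1 h with h' | h'
      · simp at h'
      · exact Or.inr h'
  case c1 =>
    intro x hx hxSt s' hs'
    by_cases hxs : x = s
    · exact hsuccfact s' (hxs ▸ hs')
    · exact inv.c1 x hx (hnotin x hxs hxSt) s' hs'
  case c4 =>
    intro x hx hxSt haccx
    by_cases hxs : x = s
    · exact Or.inr (hxs ▸ hsI)
    · exact inv.c4 x hx (hnotin x hxs hxSt) haccx
  case c7b =>
    intro r hr hrSt
    rcases inv.c7b r hr hrSt.1 with h | h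
    · exact Or.inl h
    · rcases List.mem_cons.1 h with h' | h'
      · injection h' with h''
        exact absurd h'' hrSt.2
      · exact absurd h' (shape_no_pop_OZ hoz r)
  case c3 =>
    intro r hr hnf
    rcases inv.c3 r hr (fun rest => hNoInner r rest) with h | h
    · exact Or.inl h
    · refine Or.inr fun s' hs' => ?_
      rcases h s' hs' with h1 | ⟨h1, h2⟩
      · exact Or.inl h1
      · exact Or.inr ⟨h1, fun hm => h2 hm.1⟩
  case ra =>
    intro v a hacc hva hcyc
    rcases inv.ra v a hacc hva hcyc with h | ⟨hna, hW⟩ | h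
    · exact Or.inl h
    · by_cases has : a = s
      · exact absurd (has ▸ hsI) hna
      · refine Or.inr (Or.inl ⟨hna, ?_⟩)
        rcases hW with h' | h'
        · exact Or.inl h'
        · exact Or.inr ⟨h', has⟩
    · rcases List.mem_cons.1 h with h' | h'
      · injection h' with h''
        subst h''
        exact Or.inl (pop_detect (fun r hr _ => inv.c3 r hr (fun rest => hNoInner r rest))
          hNoInner hva (Set.mem_insert _ _) hsI hcyc)
      · exact absurd h' (shape_no_pop_OZ hoz a)

lemma inv_callInner {F O I St t k}
    (inv : InvAt G F O I St (.callInner t :: k)) :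
    InvAt G F O (insert t I) St (.inner t (G.succ t) :: k) := by
  rcases shape_callInner_inv inv.shape rfl with
    ⟨k2, lk, sts, hk', hoz, hst, h1, h2, h3, h4, h5, h6⟩ |
    ⟨a, iz, t2, k2, lk, sts, hk', hoz, hiz, hedge, hu1, hu2, hu3, hst, ha1, ha2, ha3, ha4, ha5, ha6⟩
  · -- seed case: t is the seed, k = .outerPop t :: k2
    subst hk'; subst hst
    refine InvAt.mk ?shape inv.reachO ?p1 ?c1 ?c4 ?c7a ?c7b ?c3 inv.snd ?ra
    case shape =>
      exact Shape.innerZ t hoz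
        (IZ.base (G.succ t) [] none (by simp) (by simp [doneOKI]))
        rfl h1 h2 h3 (Set.mem_insert _ _) h5 h6
    case p1 =>
      rcases inv.p1 with h | h
      · exact Or.inl h
      · rcases List.mem_cons.1 h with h' | h'
        · simp at h'
        · exact Or.inr (List.mem_cons_of_mem _ h')
    case c1 =>
      exact inv.c1
    case c4 =>
      intro x hx hxSt haccx
      exact (inv.c4 x hx hxSt haccx).imp_right (Set.mem_insert_of_mem _)
    case c7a =>
      intro r hr
      rcases Set.mem_insert_iff.1 hr with rfl | hr
      · exact Or.inl h2
      · exact inv.c7a r hr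
    case c7b =>
      intro r hr hrSt
      rcases Set.mem_insert_iff.1 hr with rfl | hr
      · exact Or.inr (List.mem_cons_of_mem _ (List.mem_cons_self))
      · rcases inv.c7b r hr hrSt with h | h
        · exact Or.inl h
        · rcases List.mem_cons.1 h with h' | h'
          · simp at h'
          · exact Or.inr (List.mem_cons_of_mem _ h')
    case c3 =>
      intro r hr hnf
      rcases Set.mem_insert_iff.1 hr with rfl | hr
      · exact absurd (List.mem_cons_self) (hnf (G.succ r))
      · have hnf' : ∀ rest, NFrame.inner r rest ∉
            NFrame.callInner t :: NFrame.outerPop t :: k2 := by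
          intro rest hmem
          rcases List.mem_cons.1 hmem with h' | h'
          · simp at h'
          · exact hnf rest (List.mem_cons_of_mem _ h')
        rcases inv.c3 r hr hnf' with h | h
        · exact Or.inl h
        · exact Or.inr fun s' hs' =>
            (h s' hs').imp_right (fun hh => ⟨Set.mem_insert_of_mem _ hh.1, hh.2⟩)
    case ra =>
      intro v a hacc hva hcyc
      by_cases hat : a = t
      · exact Or.inr (Or.inr (hat ▸ List.mem_cons_of_mem _ (List.mem_cons_self)))
      · rcases inv.ra v a hacc hva hcyc with h | ⟨hna, hW⟩ | h
        · exact Or.inl h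
        · exact Or.inr (Or.inl ⟨fun hm => hna ((Set.mem_insert_iff.1 hm).resolve_left hat), hW⟩)
        · rcases List.mem_cons.1 h with h' | h'
          · simp at h'
          · exact Or.inr (Or.inr (List.mem_cons_of_mem _ h'))
  · -- recursive case: t is an inner successor
    subst hk'; subst hst
    have hIZ' : IZ G F (insert t I) (insert a sts) a (.inner t (G.succ t) :: iz) t none := by
      refine IZ.cons t (G.succ t) [] none ?_ hedge (Set.mem_insert _ _) ?_ (by simp)
        (by simp [doneOKI])
      · refine IZ_discharge' (IZ_mono hiz subset_rfl (Set.subset_insert _ _)) ?_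
        intro x hx
        rw [Option.some_inj] at hx
        exact ⟨hx ▸ hu2, hx ▸ Set.mem_insert _ _⟩
      · intro r hmem
        rcases IZ_owners hiz t r hmem with h | h
        · exact hu1 (h ▸ ha4)
        · exact hu1 h
    refine InvAt.mk ?shape inv.reachO ?p1 ?c1 ?c4 ?c7a ?c7b ?c3 inv.snd ?ra
    case shape =>
      exact Shape.innerZ a hoz hIZ' rfl ha1 ha2 ha3 (Set.mem_insert_of_mem _ ha4) ha5 ha6
    case p1 =>
      rcases inv.p1 with h | h
      · exact Or.inl h
      · rcases List.mem_cons.1 h with h' | h'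
        · simp at h'
        · exact Or.inr (List.mem_cons_of_mem _ h')
    case c1 => exact inv.c1
    case c4 =>
      intro x hx hxSt haccx
      exact (inv.c4 x hx hxSt haccx).imp_right (Set.mem_insert_of_mem _)
    case c7a =>
      intro r hr
      rcases Set.mem_insert_iff.1 hr with rfl | hr
      · exact hu3
      · exact inv.c7a r hr
    case c7b =>
      intro r hr hrSt
      rcases Set.mem_insert_iff.1 hr with rfl | hr
      · exact absurd hrSt hu2
      · rcases inv.c7b r hr hrSt with h | h
        · exact Or.inl h
        · rcases List.mem_cons.1 h with h' | h'
          · simp at h'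
          · exact Or.inr (List.mem_cons_of_mem _ h')
    case c3 =>
      intro r hr hnf
      rcases Set.mem_insert_iff.1 hr with rfl | hr
      · exact absurd (List.mem_cons_self) (hnf (G.succ r))
      · have hnf' : ∀ rest, NFrame.inner r rest ∉
            NFrame.callInner t :: (iz ++ NFrame.outerPop a :: k2) := by
          intro rest hmem
          rcases List.mem_cons.1 hmem with h' | h'
          · simp at h'
          · exact hnf rest (List.mem_cons_of_mem _ h')
        rcases inv.c3 r hr hnf' with h | h
        · exact Or.inl h
        · exact Or.inr fun s' hs' =>
            (h s' hs').imp_right (fun hh => ⟨Set.mem_insert_of_mem _ hh.1, hh.2⟩)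
    case ra =>
      intro v b hacc hva hcyc
      by_cases hbt : b = t
      · subst hbt
        rcases inv.ra v b hacc hva hcyc with h | ⟨hna, hW⟩ | h
        · exact Or.inl h
        · rcases hW with h' | h'
          · rcases hu3 with h'' | h''
            · exact absurd h'' h'
            · exact Or.inl (h'' hva)
          · exact absurd h' hu2
        · rcases List.mem_cons.1 h with h' | h'
          · simp at h'
          · rcases List.mem_append.1 h' with h'' | h''
            · exact absurd h'' (shape_no_pop_IZ hiz b)
            · rcases List.mem_cons.1 h'' with h3 | h3
              · injection h3 with h4
                exact absurd (h4 ▸ ha4) hu1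
              · exact absurd h3 (shape_no_pop_OZ hoz b)
      · rcases inv.ra v b hacc hva hcyc with h | ⟨hna, hW⟩ | h
        · exact Or.inl h
        · exact Or.inr (Or.inl ⟨fun hm => hna ((Set.mem_insert_iff.1 hm).resolve_left hbt), hW⟩)
        · rcases List.mem_cons.1 h with h' | h'
          · simp at h'
          · exact Or.inr (Or.inr (List.mem_cons_of_mem _ h'))

lemma inv_innerSkip {F O I St s s' rest k}
    (h1 : s' ∉ St) (h2 : s' ∈ I ∨ G.C s' ⊆ F)
    (inv : InvAt G F O I St (.inner s (s' :: rest) :: k)) :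
    InvAt G F O I St (.inner s rest :: k) := by
  obtain ⟨a, iz2, k2, lk, sts, done, hoz, hst, ha1, ha2, ha3, ha4, ha5, ha6,
    hsucc, hdoneI, hsI, hpath, hk', hsub, hrebuild⟩ := shape_inner_inv inv.shape rfl
  subst hst; subst hk'
  refine InvAt.mk ?shape inv.reachO ?p1 inv.c1 inv.c4 inv.c7a ?c7b ?c3 inv.snd ?ra
  case shape =>
    refine Shape.innerZ a hoz
      (hrebuild rest none (done ++ [s']) (by rw [hsucc, List.append_assoc]; rfl) ?_)
      rfl ha1 ha2 ha3 ha4 ha5 ha6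
    intro x hx
    rcases List.mem_append.1 hx with hx | hx
    · exact hdoneI x hx
    · simp only [List.mem_singleton] at hx
      subst hx
      exact Or.inl ⟨h1, h2⟩
  case p1 =>
    rcases inv.p1 with h | h
    · exact Or.inl h
    · rcases List.mem_cons.1 h with h' | h'
      · simp at h'
      · exact Or.inr (List.mem_cons_of_mem _ h')
  case c7b =>
    intro r hr hrSt
    rcases inv.c7b r hr hrSt with h | h
    · exact Or.inl h
    · rcases List.mem_cons.1 h with h' | h'
      · simp at h'
      · exact Or.inr (List.mem_cons_of_mem _ h')
  case c3 =>
    intro r hr hnf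
    refine inv.c3 r hr ?_
    intro rest' hmem
    rcases List.mem_cons.1 hmem with h' | h'
    · injection h' with hr' _
      exact hnf rest (hr' ▸ List.mem_cons_self)
    · exact hnf rest' (List.mem_cons_of_mem _ h')
  case ra =>
    intro v b hacc hva hcyc
    rcases inv.ra v b hacc hva hcyc with h | h | h
    · exact Or.inl h
    · exact Or.inr (Or.inl h)
    · rcases List.mem_cons.1 h with h' | h'
      · simp at h'
      · exact Or.inr (Or.inr (List.mem_cons_of_mem _ h'))

lemma inv_innerRec {F O I St s s' rest k}
    (h1 : s' ∉ St) (h2 : s' ∉ I) (h3 : ¬ G.C s' ⊆ F)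
    (inv : InvAt G F O I St (.inner s (s' :: rest) :: k)) :
    InvAt G F O I St (.callInner s' :: .inner s rest :: k) := by
  obtain ⟨a, iz2, k2, lk, sts, done, hoz, hst, ha1, ha2, ha3, ha4, ha5, ha6,
    hsucc, hdoneI, hsI, hpath, hk', hsub, hrebuild⟩ := shape_inner_inv inv.shape rfl
  subst hst; subst hk'
  have hedge : Edge G s s' := by
    show s' ∈ G.succ s
    rw [hsucc]
    exact List.mem_append_right _ (List.mem_cons_self)
  have hs'OF : s' ∈ O ∨ G.C s' ⊆ F := by
    rcases inv.c7a s hsI with hsO | hsF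
    · by_cases hsSt : s ∈ insert a sts
      · rcases inv.c7b s hsI hsSt with h | h
        · exact Or.inr ((C_anti_edge hedge).trans h)
        · rcases List.mem_cons.1 h with h' | h'
          · simp at h'
          · rcases List.mem_append.1 h' with h'' | h''
            · rcases hsub with ⟨rfl, _⟩ | ⟨t2, hiz2, _, _⟩
              · simp at h''
              · exact absurd h'' (shape_no_pop_IZ hiz2 s)
            · rcases List.mem_cons.1 h'' with h4 | h4
              · injection h4 with h5
                exact ha6 s' (h5 ▸ hedge)
              · exact absurd h4 (shape_no_pop_OZ hoz s)
      · exact inv.c1 s hsO hsSt s' hedge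
    · exact Or.inr ((C_anti_edge hedge).trans hsF)
  refine InvAt.mk ?shape inv.reachO ?p1 inv.c1 inv.c4 inv.c7a ?c7b ?c3 inv.snd ?ra
  case shape =>
    refine Shape.innerCall a s'  hoz
      (hrebuild rest (some s') (done ++ [s']) (by rw [hsucc, List.append_assoc]; rfl) ?_)
      hedge h2 h1 hs'OF rfl ha1 ha2 ha3 ha4 ha5 ha6
    intro x hx
    rcases List.mem_append.1 hx with hx | hx
    · exact (hdoneI x hx).imp_right (fun h => by simp at h)
    · simp only [List.mem_singleton] at hx
      exact Or.inr (by rw [hx])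
  case p1 =>
    rcases inv.p1 with h | h
    · exact Or.inl h
    · rcases List.mem_cons.1 h with h' | h'
      · simp at h'
      · exact Or.inr (List.mem_cons_of_mem _ (List.mem_cons_of_mem _ h'))
  case c7b =>
    intro r hr hrSt
    rcases inv.c7b r hr hrSt with h | h
    · exact Or.inl h
    · rcases List.mem_cons.1 h with h' | h'
      · simp at h'
      · exact Or.inr (List.mem_cons_of_mem _ (List.mem_cons_of_mem _ h'))
  case c3 =>
    intro r hr hnf
    refine inv.c3 r hr ?_
    intro rest' hmem
    rcases List.mem_cons.1 hmem with h' | h'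
    · injection h' with hr' _
      exact hnf rest (hr' ▸ List.mem_cons_of_mem _ (List.mem_cons_self))
    · exact hnf rest' (List.mem_cons_of_mem _ (List.mem_cons_of_mem _ h'))
  case ra =>
    intro v b hacc hva hcyc
    rcases inv.ra v b hacc hva hcyc with h | h | h
    · exact Or.inl h
    · exact Or.inr (Or.inl h)
    · rcases List.mem_cons.1 h with h' | h'
      · simp at h'
      · exact Or.inr (Or.inr (List.mem_cons_of_mem _ (List.mem_cons_of_mem _ h')))

lemma inv_innerDone {F O I St s k}
    (inv : InvAt G F O I St (.inner s [] :: k)) :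
    InvAt G F O I St k := by
  obtain ⟨a, iz2, k2, lk, sts, done, hoz, hst, ha1, ha2, ha3, ha4, ha5, ha6,
    hsucc, hdoneI, hsI, hpath, hk', hsub, hrebuild⟩ := shape_inner_inv inv.shape rfl
  subst hst; subst hk'
  have hsuccdone : G.succ s = done := by rw [List.append_nil] at hsucc; exact hsucc
  refine InvAt.mk ?shape inv.reachO ?p1 inv.c1 inv.c4 inv.c7a ?c7b ?c3 inv.snd ?ra
  case shape =>
    rcases hsub with ⟨rfl, rfl⟩ | ⟨t2, hiz2, hedge, hnodup⟩
    · exact Shape.pop s hoz rfl ha1 ha2 ha3 ha4 ha5 ha6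
    · exact Shape.innerZ a hoz hiz2 rfl ha1 ha2 ha3 ha4 ha5 ha6
  case p1 =>
    rcases inv.p1 with h | h
    · exact Or.inl h
    · rcases List.mem_cons.1 h with h' | h'
      · simp at h'
      · exact Or.inr h'
  case c7b =>
    intro r hr hrSt
    rcases inv.c7b r hr hrSt with h | h
    · exact Or.inl h
    · rcases List.mem_cons.1 h with h' | h'
      · simp at h'
      · exact Or.inr h'
  case c3 =>
    intro r hr hnf
    by_cases hrs : r = s
    · subst hrs
      refine Or.inr fun s' hs' => ?_
      have := hdoneI s' (hsuccdone ▸ hs')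
      rcases this with ⟨hh1, hh2⟩ | hh
      · rcases hh2 with hh2 | hh2
        · exact Or.inr ⟨hh2, hh1⟩
        · exact Or.inl hh2
      · simp at hh
    · refine inv.c3 r hr ?_
      intro rest' hmem
      rcases List.mem_cons.1 hmem with h' | h'
      · injection h' with hr' _
        exact hrs hr'
      · exact hnf rest' h'
  case ra =>
    intro v b hacc hva hcyc
    rcases inv.ra v b hacc hva hcyc with h | h | h
    · exact Or.inl h
    · exact Or.inr (Or.inl h)
    · rcases List.mem_cons.1 h with h' | h'
      · simp at h'
      · exact Or.inr (Or.inr h')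

lemma inv_innerFound {F O I St s s' rest k}
    (h1 : s' ∈ St)
    (inv : InvAt G F O I St (.inner s (s' :: rest) :: k)) :
    InvAt G (F ∪ G.C s') O I St k := by
  obtain ⟨a, iz2, k2, lk, sts, done, hoz, hst, ha1, ha2, ha3, ha4, ha5, ha6,
    hsucc, hdoneI, hsI, hpath, hk', hsub, hrebuild⟩ := shape_inner_inv inv.shape rfl
  subst hst; subst hk'
  have hedge : Edge G s s' := by
    show s' ∈ G.succ s
    rw [hsucc]
    exact List.mem_append_right _ (List.mem_cons_self)
  have hs'a : ReflTransGen (Edge G) s' a := by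
    rcases Set.mem_insert_iff.1 h1 with rfl | h1'
    · exact ReflTransGen.refl
    · obtain ⟨t0, hlk0, hp0⟩ := OZ_path hoz s' h1'
      exact hp0.tail (ha5 t0 hlk0)
  have hCa : G.C a ⊆ G.C s' := C_anti hs'a
  have hCs : G.C s ⊆ G.C a := C_anti hpath
  have hCsF : G.C s ⊆ F ∪ G.C s' :=
    fun x hx => Or.inr (hCa (hCs hx))
  have hcyc : TransGen (Edge G) a a :=
    Relation.TransGen.trans_right hpath (Relation.TransGen.head'_iff.2 ⟨s', hedge, hs'a⟩)
  have hFmono : F ⊆ F ∪ G.C s' := Set.subset_union_left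
  refine InvAt.mk ?shape inv.reachO ?p1 ?c1 ?c4 ?c7a ?c7b ?c3 ?snd ?ra
  case shape =>
    rcases hsub with ⟨rfl, rfl⟩ | ⟨t2, hiz2, hedge2, hnodup⟩
    · exact Shape.pop s (OZ_mono hoz hFmono subset_rfl) rfl ha1 ha2 ha3 ha4 ha5
        (fun x hx => (ha6 x hx).imp_right (fun h => h.trans hFmono))
    · exact Shape.innerZ a (OZ_mono hoz hFmono subset_rfl)
        (IZ_mono hiz2 hFmono subset_rfl) rfl ha1 ha2 ha3 ha4 ha5
        (fun x hx => (ha6 x hx).imp_right (fun h => h.trans hFmono))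
  case p1 =>
    rcases inv.p1 with h | h
    · exact Or.inl h
    · rcases List.mem_cons.1 h with h' | h'
      · simp at h'
      · exact Or.inr h'
  case c1 =>
    intro x hx hxSt y hy
    exact (inv.c1 x hx hxSt y hy).imp_right (fun h => h.trans hFmono)
  case c4 =>
    intro x hx hxSt haccx
    exact (inv.c4 x hx hxSt haccx).imp_left (fun h => h.trans hFmono)
  case c7a =>
    intro r hr
    exact (inv.c7a r hr).imp_right (fun h => h.trans hFmono)
  case c7b =>
    intro r hr hrSt
    rcases inv.c7b r hr hrSt with h | h
    · exact Or.inl (h.trans hFmono)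
    · rcases List.mem_cons.1 h with h' | h'
      · simp at h'
      · exact Or.inr h'
  case c3 =>
    intro r hr hnf
    by_cases hrs : r = s
    · exact Or.inl (hrs ▸ hCsF)
    · have hnf' : ∀ rest', NFrame.inner r rest' ∉
          NFrame.inner s (s' :: rest) :: (iz2 ++ NFrame.outerPop a :: k2) := by
        intro rest' hmem
        rcases List.mem_cons.1 hmem with h' | h'
        · injection h' with hr' _
          exact hrs hr'
        · exact hnf rest' h'
      rcases inv.c3 r hr hnf' with h | h
      · exact Or.inl (h.trans hFmono)
      · refine Or.inr fun y hy => ?_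
        rcases h y hy with hh | hh
        · exact Or.inl (hh.trans hFmono)
        · exact Or.inr hh
  case snd =>
    intro w hw
    rcases hw with hw | hw
    · exact inv.snd w hw
    · exact ⟨a, inv.reachO a ha2, ha3, ((C_anti_edge hedge).trans hCs) hw, hcyc⟩
  case ra =>
    intro v b hacc hva hcy
    rcases inv.ra v b hacc hva hcy with h | h | h
    · exact Or.inl (hFmono h)
    · exact Or.inr (Or.inl h)
    · rcases List.mem_cons.1 h with h' | h'
      · simp at h'
      · exact Or.inr (Or.inr h')

/-- Preservation of the invariant by machine steps. -/
lemma Inv_step {c c' : NConfig S V} (h : NStep G c c') (inv : Inv G c) : Inv G c' := by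
  cases h with
  | callOuter F O I St s k => exact inv_callOuter inv
  | outerSkip F O I St s s' rest k hcond => exact inv_outerSkip hcond inv
  | outerRec F O I St s s' rest k h1 h2 h3 => exact inv_outerRec h1 h2 h3 inv
  | outerAcc F O I St s k hacc hCF => exact inv_outerAcc hacc hCF inv
  | outerDone F O I St s k hcond => exact inv_outerDone hcond inv
  | outerPop F O I St s k => exact inv_outerPop inv
  | callInner F O I St s k => exact inv_callInner inv
  | innerFound F O I St s s' rest k h1 => exact inv_innerFound h1 inv
  | innerRec F O I St s s' rest k h1 h2 h3 => exact inv_innerRec h1 h2 h3 inv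
  | innerSkip F O I St s s' rest k h1 h2 => exact inv_innerSkip h1 h2 inv
  | innerDone F O I St s k => exact inv_innerDone inv

lemma Inv_run {c : NConfig S V} (h : ReflTransGen (NStep G) (initConfig G) c) :
    Inv G c := by
  induction h with
  | refl => exact Inv_init
  | tail h1 h2 ih => exact Inv_step h2 ih

/-- At a final configuration, membership in `Found` characterises accepting lassos. -/
lemma final_iff {c : NConfig S V} (inv : Inv G c) (hfinal : c.ctrl = []) (v : V) :
    v ∈ c.found ↔ AccLasso G v := by
  constructor
  · exact fun h => inv.snd v h
  · rintro ⟨a, hreach, hacc, hva, hcyc⟩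
    have hSt : c.stack = ∅ := shape_nil_inv inv.shape hfinal
    have hinitO : G.init ∈ c.outer := by
      rcases inv.p1 with h | h
      · exact h
      · rw [hfinal] at h; simp at h
    by_contra hvF
    have key : ∀ x, ReflTransGen (Edge G) x a → x ∈ c.outer → a ∈ c.outer := by
      intro x hx
      induction hx using ReflTransGen.head_induction_on with
      | refl => exact id
      | head hstep htail ih =>
        intro hxO
        rcases inv.c1 _ hxO (by rw [hSt]; exact fun hh => hh) _ hstep with h | h
        · exact ih h
        · exact absurd (h (C_anti htail hva)) hvF
    have haO := key G.init hreach hinitO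
    have hnotSt : a ∉ c.stack := by rw [hSt]; exact fun h => h
    rcases inv.c4 a haO hnotSt hacc with h | h
    · exact hvF (h hva)
    · rcases inv.ra v a hacc hva hcyc with h' | ⟨h1, _⟩ | h'
      · exact hvF h'
      · exact h1 h
      · rw [hfinal] at h'; simp at h'

/-! #### Generic path-indexing lemmas -/

lemma rtg_map {σ τ : Type*} {R : σ → σ → Prop} {R' : τ → τ → Prop} (g : σ → τ)
    (hg : ∀ a b, R a b → R' (g a) (g b)) {x y : σ} (h : ReflTransGen R x y) :
    ReflTransGen R' (g x) (g y) := by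
  induction h with
  | refl => exact ReflTransGen.refl
  | tail h1 h2 ih => exact ih.tail (hg _ _ h2)

lemma rtg_fun {σ : Type*} {R : σ → σ → Prop} {x y : σ} (h : ReflTransGen R x y) :
    ∃ (m : ℕ) (f : ℕ → σ), f 0 = x ∧ f m = y ∧ ∀ i < m, R (f i) (f (i + 1)) := by
  induction h with
  | refl => exact ⟨0, fun _ => x, rfl, rfl, by omega⟩
  | @tail b z h1 h2 ih =>
    obtain ⟨m, f, h0, hm, hs⟩ := ih
    refine ⟨m + 1, fun i => if i ≤ m then f i else z, ?_, ?_, ?_⟩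
    · simp only [Nat.zero_le, if_pos]; exact h0
    · simp
    · intro i hi
      by_cases him : i < m
      · have e1 : i ≤ m := le_of_lt him
        have e2 : i + 1 ≤ m := him
        simp only [if_pos e1, if_pos e2]
        exact hs i him
      · have : i = m := by omega
        subst this
        simp only [if_pos (le_refl i), if_neg (by omega : ¬ i + 1 ≤ i)]
        exact hm ▸ h2

lemma transgen_fun {σ : Type*} {R : σ → σ → Prop} {x y : σ} (h : TransGen R x y) :
    ∃ (m : ℕ) (f : ℕ → σ), 0 < m ∧ f 0 = x ∧ f m = y ∧ ∀ i < m, R (f i) (f (i + 1)) := by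
  obtain ⟨b, h1, h2⟩ := (Relation.TransGen.tail'_iff).1 h
  obtain ⟨m, f, h0, hm, hs⟩ := rtg_fun h1
  refine ⟨m + 1, fun i => if i ≤ m then f i else y, by omega, ?_, ?_, ?_⟩
  · simp only [Nat.zero_le, if_pos]; exact h0
  · simp
  · intro i hi
    by_cases him : i < m
    · have e1 : i ≤ m := le_of_lt him
      have e2 : i + 1 ≤ m := him
      simp only [if_pos e1, if_pos e2]
      exact hs i him
    · have : i = m := by omega
      subst this
      simp only [if_pos (le_refl i), if_neg (by omega : ¬ i + 1 ≤ i)]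
      exact hm ▸ h2

lemma steps_rtg {σ : Type*} {R : σ → σ → Prop} {f : ℕ → σ} {m : ℕ}
    (hs : ∀ i < m, R (f i) (f (i + 1))) :
    ∀ i j, i ≤ j → j ≤ m → ReflTransGen R (f i) (f j) := by
  intro i j hij hjm
  obtain ⟨d, rfl⟩ : ∃ d, j = i + d := ⟨j - i, by omega⟩
  clear hij
  revert hjm
  induction d with
  | zero => intro _; exact ReflTransGen.refl
  | succ d ih =>
    intro h2
    exact (ih (by omega)).tail (hs (i + d) (by omega))

lemma mod_step (a m : ℕ) : (a + 1) % m = ((a % m) + 1) % m := by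
  conv_lhs => rw [← Nat.mod_add_div a m, Nat.add_right_comm, Nat.add_mul_mod_self_left]

/-! #### The bridge: accepting lassos in `G` vs accepting runs of `⟦A⟧^α` -/

lemma accLasso_iff_absAccRun
    {A : PTBA L n P} {lb ub : P → ℤ} {α : Abstr L n P}
    {G : NGraph (Option (SymState L n P)) (P → ℤ)}
    (hfin : (AbsStates A lb ub α).Finite)
    (hinit : G.init = none)
    (hsucc0 : ∀ Q, some Q ∈ G.succ none ↔ Q ∈ AbsInit A lb ub α)
    (hsucc : ∀ Q Q', some Q' ∈ G.succ (some Q) ↔ AbsStep A α Q Q')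
    (hnone : ∀ s, none ∉ G.succ s)
    (hacc : ∀ Q, G.acc (some Q) ↔ Q.1 ∈ A.F)
    (hC : ∀ Q, G.C (some Q) = csem Q.2.1)
    (v : P → ℤ) :
    AccLasso G v ↔ AbsAccRun A lb ub α v := by
  have target_some : ∀ {x y}, Edge G x y → ∃ Q, y = some Q := by
    intro x y h
    cases y with
    | none => exact absurd h (hnone x)
    | some Q => exact ⟨Q, rfl⟩
  have closed_some : ∀ {Q y}, ReflTransGen (Edge G) (some Q) y → ∃ Qy, y = some Qy := by
    intro Q y h
    induction h with
    | refl => exact ⟨Q, rfl⟩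
    | tail h1 h2 ih => exact target_some h2
  have rtg_transfer : ∀ {Q y}, ReflTransGen (Edge G) (some Q) y →
      ∀ {Q'}, y = some Q' → ReflTransGen (AbsStep A α) Q Q' := by
    intro Q y h
    induction h with
    | refl =>
      intro Q' hQ'
      injection hQ' with h'
      exact h' ▸ ReflTransGen.refl
    | tail h1 h2 ih =>
      intro Q' hQ'
      subst hQ'
      obtain ⟨Qb, rfl⟩ := closed_some h1
      exact (ih rfl).tail ((hsucc _ _).1 h2)
  have hCmono : ∀ {x y : SymState L n P}, ReflTransGen (AbsStep A α) x y →
      G.C (some y) ⊆ G.C (some x) := by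
    intro x y h
    exact C_anti (rtg_map some (fun a b hab => (hsucc a b).2 hab) h)
  constructor
  · rintro ⟨a, hreach0, haccA, hva, hcyc⟩
    have hreach : ReflTransGen (Edge G) none a := by
      have h : ReflTransGen (Edge G) G.init a := hreach0
      rw [hinit] at h
      exact h
    obtain ⟨Q, rfl⟩ : ∃ Q, a = some Q := by
      rcases (Relation.TransGen.tail'_iff).1 hcyc with ⟨b, h1, h2⟩
      exact target_some h2
    rcases hreach.cases_head with h | ⟨c, hc1, hc2⟩
    · exact absurd h (by simp)
    obtain ⟨Q0, rfl⟩ := target_some hc1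
    have hQ0 : Q0 ∈ AbsInit A lb ub α := (hsucc0 Q0).1 hc1
    have hpathR : ReflTransGen (AbsStep A α) Q0 Q := rtg_transfer hc2 rfl
    have hcycR : TransGen (AbsStep A α) Q Q := by
      rcases (Relation.TransGen.tail'_iff).1 hcyc with ⟨b, h1, h2⟩
      obtain ⟨Qb, rfl⟩ := closed_some h1
      exact Relation.TransGen.tail' (rtg_transfer h1 rfl) ((hsucc _ _).1 h2)
    obtain ⟨m1, f1, hf10, hf1m, hf1s⟩ := rtg_fun hpathR
    obtain ⟨m2, f2, hm2pos, hf20, hf2m, hf2s⟩ := transgen_fun hcycR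
    have hvmem : ∀ x : SymState L n P, ReflTransGen (AbsStep A α) x Q →
        v ∈ csem x.2.1 := by
      intro x hx
      rw [← hC x]
      exact hCmono hx hva
    set ρ : ℕ → SymState L n P :=
      fun i => if i < m1 then f1 i else f2 ((i - m1) % m2) with hρdef
    have hρlow : ∀ i, i < m1 → ρ i = f1 i := by
      intro i hi; simp only [hρdef, if_pos hi]
    have hρhigh : ∀ i, m1 ≤ i → ρ i = f2 ((i - m1) % m2) := by
      intro i hi; simp only [hρdef, if_neg (by omega : ¬ i < m1)]
    have hstep : ∀ i, AbsStep A α (ρ i) (ρ (i + 1)) := by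
      intro i
      by_cases h1 : i + 1 < m1
      · rw [hρlow i (by omega), hρlow (i+1) h1]
        exact hf1s i (by omega)
      · by_cases h2 : i < m1
        · have he : i + 1 = m1 := by omega
          rw [hρlow i h2, hρhigh (i+1) (by omega)]
          have e0 : (i + 1 - m1) % m2 = 0 := by rw [he]; simp
          rw [e0, hf20, ← hf1m, ← he]
          exact hf1s i (by omega)
        · have hi : m1 ≤ i := by omega
          rw [hρhigh i hi, hρhigh (i+1) (by omega)]
          have hjlt : (i - m1) % m2 < m2 := Nat.mod_lt _ hm2pos
          have e1 : (i + 1 - m1) % m2 = (((i - m1) % m2) + 1) % m2 := by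
            rw [show i + 1 - m1 = (i - m1) + 1 by omega]
            exact mod_step _ _
          rcases Nat.lt_or_ge (((i - m1) % m2) + 1) m2 with hlt | hge
          · rw [e1, Nat.mod_eq_of_lt hlt]
            exact hf2s _ hjlt
          · have he2 : ((i - m1) % m2) + 1 = m2 := by omega
            rw [e1, he2, Nat.mod_self, hf20]
            have hstep2 := hf2s _ hjlt
            rw [he2, hf2m] at hstep2
            exact hstep2
    have hρv : ∀ i, v ∈ csem (ρ i).2.1 := by
      intro i
      by_cases h2 : i < m1
      · rw [hρlow i h2]
        exact hvmem _ (by rw [← hf1m]; exact steps_rtg hf1s i m1 (by omega) (le_refl _))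
      · rw [hρhigh i (by omega)]
        have hjlt : (i - m1) % m2 < m2 := Nat.mod_lt _ hm2pos
        exact hvmem _ (by rw [← hf2m]; exact steps_rtg hf2s _ m2 (by omega) (le_refl _))
    have hρ0 : ρ 0 = Q0 := by
      by_cases h : 0 < m1
      · rw [hρlow 0 h]; exact hf10
      · have hm1 : m1 = 0 := by omega
        rw [hρhigh 0 (by omega)]
        simp only [Nat.zero_sub, Nat.zero_mod]
        rw [hf20, ← hf1m, hm1, hf10]
    refine ⟨ρ, hρ0 ▸ hQ0, hstep, hρv, ?_⟩
    intro N
    refine ⟨m1 + N * m2, by nlinarith, ?_⟩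
    rw [hρhigh _ (by omega), show m1 + N * m2 - m1 = N * m2 by omega, Nat.mul_mod_left, hf20]
    exact (hacc Q).1 haccA
  · rintro ⟨ρ, hρ0, hρstep, hρv, hρacc⟩
    have hmemA : ∀ i, ρ i ∈ AbsStates A lb ub α := by
      intro i
      induction i with
      | zero => exact ⟨ρ 0, hρ0, ReflTransGen.refl⟩
      | succ i ih =>
        obtain ⟨Q0, hQ0, hr⟩ := ih
        exact ⟨Q0, hQ0, hr.tail (hρstep i)⟩
    have hTinf : {i : ℕ | (ρ i).1 ∈ A.F}.Infinite := by
      apply Set.infinite_of_not_bddAbove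
      rintro ⟨b, hb⟩
      obtain ⟨i, hNi, hFi⟩ := hρacc (b + 1)
      have := hb hFi
      omega
    obtain ⟨i, hi, j, hj, hij, hQeq⟩ :=
      Set.Infinite.exists_ne_map_eq_of_mapsTo hTinf (fun i _ => hmemA i) hfin
    have hiter : ∀ k, ReflTransGen (Edge G) (some (ρ 0)) (some (ρ k)) := by
      intro k
      induction k with
      | zero => exact ReflTransGen.refl
      | succ k ih => exact ih.tail ((hsucc _ _).2 (hρstep k))
    have hcyc' : ∀ k l, k < l → TransGen (Edge G) (some (ρ k)) (some (ρ l)) := by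
      intro k l hkl
      induction l with
      | zero => omega
      | succ l ih =>
        rcases Nat.lt_succ_iff_lt_or_eq.1 hkl with h | h
        · exact (ih h).tail ((hsucc _ _).2 (hρstep l))
        · subst h
          exact Relation.TransGen.single ((hsucc _ _).2 (hρstep _))
    have claim : ∀ i j, i < j → (ρ i).1 ∈ A.F → ρ i = ρ j → AccLasso G v := by
      intro i j hlt hF heq
      refine ⟨some (ρ i), ?_, (hacc _).2 hF, ?_, ?_⟩
      · show ReflTransGen (Edge G) G.init _
        rw [hinit]
        exact ReflTransGen.head ((hsucc0 _).2 hρ0) (hiter i)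
      · rw [hC]
        exact hρv i
      · have := hcyc' i j hlt
        rw [← heq] at this
        exact this
    rcases (Ne.lt_or_gt hij) with h | h
    · exact claim i j h hi hQeq
    · exact claim j i h hj hQeq.symm

end NDFSProof

/-- A parameter valuation `v` is contained in the set `Accepted`
returned by the Cumulative NDFS algorithm run on (the graph of) the finite induced
transition system `⟦A⟧^α` if and only if there exists an accepting run respecting `v`
in `⟦A⟧^α`. -/
theorem cumulative_ndfs_correct_on_abstraction
    (A : PTBA L n P) (lb ub : P → ℤ) (α : Abstr L n P)
    (hα : IsAbstraction A α)
    (hfin : (AbsStates A lb ub α).Finite)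
    (G : NGraph (Option (SymState L n P)) (P → ℤ))
    (hinit : G.init = none)
    (hsucc0 : ∀ Q, some Q ∈ G.succ none ↔ Q ∈ AbsInit A lb ub α)
    (hsucc : ∀ Q Q', some Q' ∈ G.succ (some Q) ↔ AbsStep A α Q Q')
    (hnone : ∀ s, none ∉ G.succ s)
    (hacc : ∀ Q, G.acc (some Q) ↔ Q.1 ∈ A.F)
    (hacc0 : ¬ G.acc none)
    (hC : ∀ Q, G.C (some Q) = csem Q.2.1)
    (hC0 : G.C none = Set.univ)
    (v : P → ℤ) (c : NConfig (Option (SymState L n P)) (P → ℤ))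
    (hrun : ReflTransGen (NStep G) (initConfig G) c) (hfinal : c.ctrl = []) :
    v ∈ c.found ↔ AbsAccRun A lb ub α v := by
  have inv : Inv G c := Inv_run hrun
  rw [final_iff inv hfinal]
  exact accLasso_iff_absAccRun hfin hinit hsucc0 hsucc hnone hacc hC v

end PTASynth
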